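/- arXiv:2312.10614 — 6 statements merged into one kernel-verified Lean document; each statement's English description precedes it below -/
import Mathlib

section
/- For Re(u) > 1 and Re(v) > 1, the double sum over pairs (q,r) with q = r of b(q) b̄(r) q^{-u} r^{-v}, where b(m) = Σ_{k ≤ M, k | m} a(k), equals ζ(u+v) · Σ_{k ≤ M} Σ_{l ≤ M} a(k) conj(a(l)) / [k,l]^{u+v}, where [k,l] denotes the least common multiple of k and l. -/
open Complex Finset

lemma auxsummable (s : ℂ) (hs : 1 < s.re) :
    Summable (fun q : ℕ => ((q + 1 : ℕ) : ℂ) ^ (-s)) := by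
  have h := Complex.summable_one_div_nat_cpow.mpr hs
  have h2 := (summable_nat_add_iff 1).mpr h
  refine h2.congr fun n => ?_
  push_cast
  rw [cpow_neg, one_div]

lemma auxzeta (s : ℂ) (hs : 1 < s.re) (d : ℕ) (hd : 0 < d) :
    ∑' q : ℕ, (if d ∣ (q + 1) then ((q + 1 : ℕ) : ℂ) ^ (-s) else 0)
      = (d : ℂ) ^ (-s) * riemannZeta s := by
  have hinj : Function.Injective (fun n : ℕ => d * (n + 1) - 1) := by
    intro m n h
    simp only at h
    have hm : 0 < d * (m + 1) := Nat.mul_pos hd (Nat.succ_pos m)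
    have hn : 0 < d * (n + 1) := Nat.mul_pos hd (Nat.succ_pos n)
    have : d * (m + 1) = d * (n + 1) := by omega
    exact Nat.succ_injective (Nat.eq_of_mul_eq_mul_left hd this)
  have hsupp : Function.support (fun q : ℕ =>
      if d ∣ (q + 1) then ((q + 1 : ℕ) : ℂ) ^ (-s) else 0) ⊆
      Set.range (fun n : ℕ => d * (n + 1) - 1) := by
    intro q hq
    simp only [Function.mem_support, ne_eq, ite_eq_right_iff, not_forall] at hq
    obtain ⟨hdvd, -⟩ := hq
    obtain ⟨m, hm⟩ := hdvd
    have hm1 : 1 ≤ m := Nat.pos_of_ne_zero fun h => by simp [h] at hm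
    refine ⟨m - 1, ?_⟩
    simp only
    have h2 : m - 1 + 1 = m := by omega
    rw [h2]
    omega
  rw [← hinj.tsum_eq hsupp]
  have key : ∀ n : ℕ, (if d ∣ (d * (n + 1) - 1 + 1) then
      ((d * (n + 1) - 1 + 1 : ℕ) : ℂ) ^ (-s) else 0)
      = (d : ℂ) ^ (-s) * ((n + 1 : ℕ) : ℂ) ^ (-s) := by
    intro n
    have h1 : d * (n + 1) - 1 + 1 = d * (n + 1) := by
      have : 0 < d * (n + 1) := Nat.mul_pos hd (Nat.succ_pos n)
      omega
    rw [h1, if_pos (Dvd.intro _ rfl)]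
    have : ((d * (n + 1) : ℕ) : ℂ) = ((d : ℝ) : ℂ) * (((n + 1 : ℕ) : ℝ) : ℂ) := by
      push_cast; ring
    rw [this, mul_cpow_ofReal_nonneg (by positivity) (by positivity)]
    push_cast; ring
  simp only [key]
  rw [tsum_mul_left, zeta_eq_tsum_one_div_nat_add_one_cpow hs]
  congr 1
  refine tsum_congr fun n => ?_
  push_cast
  rw [cpow_neg, one_div]

theorem stmt0 (M : ℕ) (hM : 1 ≤ M) (a : ℕ → ℂ) (u v : ℂ) (hu : 1 < u.re) (hv : 1 < v.re)
    (b : ℕ → ℂ) (hb : ∀ m, b m = ∑ k ∈ (Icc 1 M).filter (· ∣ m), a k) :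
    ∑' q : ℕ, b (q + 1) * (starRingEnd ℂ) (b (q + 1)) *
        ((q + 1 : ℕ) : ℂ) ^ (-u) * ((q + 1 : ℕ) : ℂ) ^ (-v)
      = riemannZeta (u + v) *
        ∑ k ∈ Icc 1 M, ∑ l ∈ Icc 1 M,
          a k * (starRingEnd ℂ) (a l) / ((Nat.lcm k l : ℂ) ^ (u + v)) := by
  set s := u + v with hsdef
  have hs : 1 < s.re := by
    rw [hsdef, add_re]; linarith
  have hb' : ∀ m, b m = ∑ k ∈ Icc 1 M, if k ∣ m then a k else 0 := by
    intro m; rw [hb, Finset.sum_filter]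
  have hpt : ∀ q : ℕ, b (q + 1) * (starRingEnd ℂ) (b (q + 1)) *
      ((q + 1 : ℕ) : ℂ) ^ (-u) * ((q + 1 : ℕ) : ℂ) ^ (-v)
      = ∑ k ∈ Icc 1 M, ∑ l ∈ Icc 1 M, a k * (starRingEnd ℂ) (a l) *
        (if Nat.lcm k l ∣ (q + 1) then ((q + 1 : ℕ) : ℂ) ^ (-s) else 0) := by
    intro q
    have hx : ((q + 1 : ℕ) : ℂ) ≠ 0 := by
      exact Nat.cast_ne_zero.mpr (Nat.succ_ne_zero q)
    have hcpow : ((q + 1 : ℕ) : ℂ) ^ (-u) * ((q + 1 : ℕ) : ℂ) ^ (-v)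
        = ((q + 1 : ℕ) : ℂ) ^ (-s) := by
      rw [← cpow_add _ _ hx, hsdef]; ring_nf
    rw [mul_assoc, hcpow, hb', map_sum, Finset.sum_mul_sum, Finset.sum_mul]
    refine Finset.sum_congr rfl fun k _ => ?_
    rw [Finset.sum_mul]
    refine Finset.sum_congr rfl fun l _ => ?_
    by_cases hk : k ∣ q + 1 <;> by_cases hl : l ∣ q + 1
    · simp [hk, hl, Nat.lcm_dvd hk hl]
    · have : ¬ Nat.lcm k l ∣ q + 1 := fun h => hl ((Nat.dvd_lcm_right k l).trans h)
      simp [hk, hl, this]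
    · have : ¬ Nat.lcm k l ∣ q + 1 := fun h => hk ((Nat.dvd_lcm_left k l).trans h)
      simp [hk, hl, this]
    · have : ¬ Nat.lcm k l ∣ q + 1 := fun h => hk ((Nat.dvd_lcm_left k l).trans h)
      simp [hk, hl, this]
  have hS : Summable (fun q : ℕ => ((q + 1 : ℕ) : ℂ) ^ (-s)) := auxsummable s hs
  have hsump : ∀ k l : ℕ, Summable (fun q : ℕ => a k * (starRingEnd ℂ) (a l) *
      (if Nat.lcm k l ∣ (q + 1) then ((q + 1 : ℕ) : ℂ) ^ (-s) else 0)) := by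
    intro k l
    refine Summable.mul_left _ ?_
    refine Summable.of_norm_bounded hS.norm fun q => ?_
    split_ifs <;> simp
  calc ∑' q : ℕ, b (q + 1) * (starRingEnd ℂ) (b (q + 1)) *
        ((q + 1 : ℕ) : ℂ) ^ (-u) * ((q + 1 : ℕ) : ℂ) ^ (-v)
      = ∑' q : ℕ, ∑ k ∈ Icc 1 M, ∑ l ∈ Icc 1 M, a k * (starRingEnd ℂ) (a l) *
        (if Nat.lcm k l ∣ (q + 1) then ((q + 1 : ℕ) : ℂ) ^ (-s) else 0) :=
        tsum_congr hpt
    _ = ∑ k ∈ Icc 1 M, ∑ l ∈ Icc 1 M, ∑' q : ℕ, a k * (starRingEnd ℂ) (a l) *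
        (if Nat.lcm k l ∣ (q + 1) then ((q + 1 : ℕ) : ℂ) ^ (-s) else 0) := by
        rw [Summable.tsum_finsetSum fun k _ => summable_sum fun l _ => hsump k l]
        exact Finset.sum_congr rfl fun k _ =>
          Summable.tsum_finsetSum fun l _ => hsump k l
    _ = riemannZeta s * ∑ k ∈ Icc 1 M, ∑ l ∈ Icc 1 M,
          a k * (starRingEnd ℂ) (a l) / ((Nat.lcm k l : ℂ) ^ s) := by
        rw [Finset.mul_sum]
        refine Finset.sum_congr rfl fun k hk => ?_
        rw [Finset.mul_sum]
        refine Finset.sum_congr rfl fun l hl => ?_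
        have hkpos : 0 < k := (Finset.mem_Icc.mp hk).1
        have hlpos : 0 < l := (Finset.mem_Icc.mp hl).1
        have hd : 0 < Nat.lcm k l := Nat.pos_of_ne_zero (Nat.lcm_ne_zero hkpos.ne' hlpos.ne')
        rw [tsum_mul_left, auxzeta s hs _ hd, cpow_neg]
        ring
end

section
/- For complex v with Re(v) > 1, real y > 0 implicit, positive integers h, k, l, f, and with absolute convergence: Γ(v) · Σ_{n=1}^∞ e^{2πi f n / l} (hk + n)^{-v} = ∫_0^∞ y^{v-1} e^{-hky} / (e^{y - 2πi f/l} - 1) dy. -/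
open Complex Real

theorem stmt7 (v : ℂ) (hv : 1 < v.re) (h k l f : ℕ)
    (hh : 0 < h) (hk : 0 < k) (hl : 0 < l) (hf1 : 1 ≤ f) (hfl : f ≤ l) :
    Complex.Gamma v *
        ∑' n : ℕ, Complex.exp (2 * (π : ℂ) * I * ((n : ℂ) + 1) * (f : ℂ) / (l : ℂ)) *
          ((h * k + (n + 1) : ℕ) : ℂ) ^ (-v)
      = ∫ y : ℝ in Set.Ioi 0,
          (y : ℂ) ^ (v - 1) * Complex.exp (-((h * k : ℕ) : ℂ) * (y : ℂ)) /
            (Complex.exp ((y : ℂ) - 2 * (π : ℂ) * I * (f : ℂ) / (l : ℂ)) - 1) := by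
  set c : ℂ := 2 * (π : ℂ) * I * (f : ℂ) / (l : ℂ) with hc
  have hcre : c.re = 0 := by
    simp [hc, div_ofReal_re]
  set a : ℕ → ℂ := fun n => Complex.exp (((n : ℂ) + 1) * c) with ha
  set p : ℕ → ℝ := fun n => ((h * k + (n + 1) : ℕ) : ℝ) with hp
  set F : ℝ → ℂ := fun y =>
    Complex.exp (-((h * k : ℕ) : ℂ) * (y : ℝ)) /
      (Complex.exp ((y : ℂ) - c) - 1) with hF
  have hpn : ∀ n, (0 : ℝ) < p n := fun n => by
    simp only [hp]; positivity
  have key : HasSum (fun n => Complex.Gamma v * a n / (p n : ℂ) ^ v) (mellin F v) := by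
    apply hasSum_mellin (fun n => Or.inr (hpn n)) (by linarith)
    · intro t ht
      rw [Set.mem_Ioi] at ht
      set w : ℂ := Complex.exp (-(t : ℂ) + c) with hw
      have hwn : ‖w‖ < 1 := by
        rw [hw, Complex.norm_exp]
        simp only [Complex.add_re, Complex.neg_re, Complex.ofReal_re, hcre, add_zero]
        exact Real.exp_lt_one_iff.mpr (by linarith)
      have h1w : (1 : ℂ) - w ≠ 0 := by
        intro hz
        rw [sub_eq_zero] at hz
        rw [← hz] at hwn; simp at hwn
      have hww : Complex.exp ((t : ℂ) - c) * w = 1 := by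
        rw [hw, ← Complex.exp_add]
        rw [show (t : ℂ) - c + (-(t : ℂ) + c) = 0 by ring, Complex.exp_zero]
      have he : Complex.exp ((t : ℂ) - c) - 1 ≠ 0 := by
        intro hz
        rw [sub_eq_zero] at hz
        rw [hz, one_mul] at hww
        rw [hww] at hwn; simp at hwn
      have geo := (hasSum_geometric_of_norm_lt_one hwn).mul_left
        (Complex.exp (-((h * k : ℕ) : ℂ) * t) * w)
      convert geo using 1
      · rfl
      · funext n
        rw [Complex.ofReal_exp, mul_assoc, ← Complex.exp_nat_mul, ← Complex.exp_add,
          ← Complex.exp_add, ← Complex.exp_add]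
        congr 1
        rw [hp]
        push_cast
        ring
      · have key2 : (Complex.exp ((t : ℂ) - c) - 1)⁻¹ = w * (1 - w)⁻¹ := by
          refine inv_eq_of_mul_eq_one_right ?_
          rw [← mul_assoc, sub_mul, one_mul, hww]
          exact mul_inv_cancel₀ h1w
        simp only [hF]
        rw [div_eq_mul_inv, key2]
        ring
    · have hs : Summable fun n : ℕ => 1 / ((n : ℝ)) ^ v.re :=
        Real.summable_one_div_nat_rpow.mpr (by linarith)
      have := (summable_nat_add_iff (h * k + 1)).mpr hs
      apply this.congr
      intro n
      have hab : ‖a n‖ = 1 := by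
        rw [ha, Complex.norm_exp]
        simp [Complex.mul_re, hcre]
      rw [hab]
      congr 2
      rw [hp]
      push_cast; ring
  have hmel : mellin F v = ∫ y : ℝ in Set.Ioi 0,
      (y : ℂ) ^ (v - 1) * Complex.exp (-((h * k : ℕ) : ℂ) * (y : ℂ)) /
        (Complex.exp ((y : ℂ) - c) - 1) := by
    rw [mellin]
    refine MeasureTheory.setIntegral_congr_fun measurableSet_Ioi fun y hy => ?_
    simp only [hF]
    rw [smul_eq_mul, mul_div_assoc]
  rw [← hmel, ← key.tsum_eq, ← tsum_mul_left]
  refine tsum_congr fun n => ?_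
  have h1 : ((p n : ℝ) : ℂ) = ((h * k + (n + 1) : ℕ) : ℂ) := by
    simp only [hp]; norm_cast
  have h2 : (2 * (π : ℂ) * I * ((n : ℂ) + 1) * (f : ℂ) / (l : ℂ)) = ((n : ℂ) + 1) * c := by
    rw [hc]; ring
  simp only [ha]
  rw [h2, cpow_neg, h1, mul_div_assoc, div_eq_mul_inv]
end

section
/- For Re(u) > 0, y > 0, and positive integers k, l, f: k^{-u} Γ(u) Σ_{h=1}^∞ e^{-hky + 2πi f h k / l} h^{-u} = ∫_0^∞ x^{u-1} / (e^{k(x+y) - 2πi f k / l} - 1) dx. -/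
open Complex Real

theorem stmt8 (u : ℂ) (hu : 0 < u.re) (y : ℝ) (hy : 0 < y) (k l f : ℕ)
    (hk : 0 < k) (hl : 0 < l) (hf1 : 1 ≤ f) (hfl : f ≤ l) :
    (k : ℂ) ^ (-u) * Complex.Gamma u *
        ∑' h : ℕ, Complex.exp (-(((h : ℂ) + 1) * (k : ℂ) * (y : ℂ))
            + 2 * (π : ℂ) * I * (f : ℂ) * ((h : ℂ) + 1) * (k : ℂ) / (l : ℂ)) *
          ((h + 1 : ℕ) : ℂ) ^ (-u)
      = ∫ x : ℝ in Set.Ioi 0,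
          (x : ℂ) ^ (u - 1) /
            (Complex.exp ((k : ℂ) * ((x : ℂ) + (y : ℂ)) - 2 * (π : ℂ) * I * (f : ℂ) * (k : ℂ) / (l : ℂ)) - 1) := by
  have hk' : (0:ℝ) < (k:ℝ) := by exact_mod_cast hk
  set c : ℂ := 2 * (π : ℂ) * I * (f : ℂ) * (k : ℂ) / (l : ℂ) with hc
  set F : ℝ → ℂ := fun t => (Complex.exp ((k : ℂ) * ((t : ℂ) + (y : ℂ)) - c) - 1)⁻¹ with hFdef
  set a : ℕ → ℂ := fun h => Complex.exp (-(((h : ℂ) + 1) * (k : ℂ) * (y : ℂ))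
      + 2 * (π : ℂ) * I * (f : ℂ) * ((h : ℂ) + 1) * (k : ℂ) / (l : ℂ)) with ha
  set p : ℕ → ℝ := fun h => ((h : ℝ) + 1) * k with hp
  have hp0 : ∀ h, a h = 0 ∨ 0 < p h := fun h => Or.inr (by positivity)
  have hanorm : ∀ h : ℕ, ‖a h‖ = rexp (-(((h:ℝ) + 1) * k * y)) := by
    intro h
    rw [ha]
    simp only [Complex.norm_exp]
    congr 1
    have him : (2 * (π:ℂ) * I * (f:ℂ) * ((h:ℂ) + 1) * (k:ℂ) / (l:ℂ))
        = ((2 * π * f * ((h:ℝ) + 1) * k / l : ℝ) : ℂ) * I := by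
      push_cast; ring
    rw [him]
    simp
  have hF : ∀ t ∈ Set.Ioi (0:ℝ), HasSum (fun h => a h * rexp (-p h * t)) (F t) := by
    intro t ht
    rw [Set.mem_Ioi] at ht
    set z : ℂ := Complex.exp (-((k : ℂ) * ((t : ℂ) + (y : ℂ)) - c)) with hz
    have hzn : ‖z‖ < 1 := by
      rw [hz, Complex.norm_exp]
      rw [Real.exp_lt_one_iff]
      have hcre : c = ((2 * π * f * k / l : ℝ) : ℂ) * I := by
        rw [hc]; push_cast; ring
      have : ((-((k : ℂ) * ((t : ℂ) + (y : ℂ)) - c))).re = -(k * (t + y)) := by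
        rw [hcre]; simp
      rw [this]
      nlinarith
    have hz0 : z ≠ 0 := Complex.exp_ne_zero _
    have h1z : (1:ℂ) - z ≠ 0 := by
      intro h
      have : z = 1 := by linear_combination -h
      rw [this] at hzn
      simp at hzn
    have hgeo := (hasSum_geometric_of_norm_lt_one hzn).mul_left z
    have hterm : (fun h : ℕ => a h * rexp (-p h * t)) = fun n : ℕ => z * z ^ n := by
      funext h
      rw [ha, hp, hz]
      push_cast
      rw [← Complex.exp_nat_mul, ← Complex.exp_add, ← Complex.exp_add]
      congr 1
      rw [hc]
      ring
    rw [hterm]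
    convert hgeo using 1
    · rfl
    simp only [hFdef]
    have hzi : Complex.exp ((k : ℂ) * ((t : ℂ) + (y : ℂ)) - c) = z⁻¹ := by
      rw [hz, ← Complex.exp_neg, neg_neg]
    rw [hzi]
    have hzz : z⁻¹ - 1 = (1 - z) * z⁻¹ := by field_simp
    rw [hzz, mul_inv, inv_inv]
    ring
  have h_sum : Summable fun h : ℕ => ‖a h‖ / (p h) ^ u.re := by
    apply Summable.of_nonneg_of_le (fun h => by positivity)
      (f := fun h : ℕ => rexp (-(k * y)) ^ (h + 1))
    · intro h
      rw [hanorm]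
      have h1 : rexp (-(((h:ℝ) + 1) * k * y)) = rexp (-(k * y)) ^ (h + 1) := by
        rw [← Real.exp_nat_mul]
        congr 1
        push_cast
        ring
      rw [h1]
      have h2 : (1:ℝ) ≤ (p h) ^ u.re := by
        apply Real.one_le_rpow _ hu.le
        simp only [hp]
        have : (1:ℝ) ≤ (k:ℝ) := by exact_mod_cast hk
        nlinarith [Nat.cast_nonneg (α := ℝ) h]
      exact div_le_self (by positivity) h2
    · have hr1 : rexp (-(k * y)) < 1 := by
        rw [Real.exp_lt_one_iff]
        nlinarith
      simpa [pow_succ] using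
        (summable_geometric_of_lt_one (Real.exp_nonneg _) hr1).mul_right (rexp (-(k * y)))
  have HS := hasSum_mellin hp0 hu hF h_sum
  have hmel : mellin F u = ∫ x : ℝ in Set.Ioi 0,
      (x : ℂ) ^ (u - 1) / (Complex.exp ((k : ℂ) * ((x : ℂ) + (y : ℂ)) - c) - 1) := by
    rw [mellin]
    simp only [hFdef, smul_eq_mul, div_eq_mul_inv]
  have hterm : ∀ h : ℕ, (k : ℂ) ^ (-u) * Complex.Gamma u * (a h * ((h + 1 : ℕ) : ℂ) ^ (-u))
      = Complex.Gamma u * a h / ((p h : ℝ) : ℂ) ^ u := by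
    intro h
    have hph : ((p h : ℝ) : ℂ) ^ u = ((((h + 1 : ℕ) : ℝ)) : ℂ) ^ u * (((k : ℝ) : ℂ)) ^ u := by
      rw [← mul_cpow_ofReal_nonneg (by positivity) (by positivity)]
      congr 2
      simp only [hp]
      push_cast
      ring
    rw [hph, cpow_neg, cpow_neg]
    have h1 : (((h + 1 : ℕ) : ℝ) : ℂ) ^ u ≠ 0 := by
      rw [Ne, cpow_eq_zero_iff, not_and_or]
      left
      intro h0
      rw [Complex.ofReal_eq_zero] at h0
      push_cast at h0
      have := Nat.cast_nonneg (α := ℝ) h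
      linarith
    have h2 : (((k : ℝ) : ℂ)) ^ u ≠ 0 := by
      rw [Ne, cpow_eq_zero_iff, not_and_or]
      left
      intro h0
      rw [Complex.ofReal_eq_zero] at h0
      exact absurd h0 (by positivity)
    have hcast1 : ((h + 1 : ℕ) : ℂ) = (((h + 1 : ℕ) : ℝ) : ℂ) := by push_cast; ring
    have hcast2 : (k : ℂ) = ((k : ℝ) : ℂ) := by push_cast; ring
    rw [hcast1, hcast2]
    field_simp
  rw [hmel.symm, ← HS.tsum_eq, ← tsum_mul_left]
  exact tsum_congr fun h => hterm h
end

section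
/- Define h(u, x) = ∫_0^∞ y^{2σ-1-u}(1+y)^{u-1} e^{2πi x y} dy for fixed σ ∈ (1/4, 1/2), Re(u) < 2σ and x > 0. Then h(u, x) = O(x^{Re(u) - 2σ}) as x → ∞, uniformly for u in a fixed compact set with Re(u) < 0. -/
open Complex Real MeasureTheory Set Filter Topology

noncomputable def G12 (σ : ℝ) (u : ℂ) (x : ℝ) (z : ℂ) : ℂ :=
  z ^ (2 * (σ : ℂ) - 1 - u) * ((1 : ℂ) + z) ^ (u - 1) * Complex.exp (2 * (π : ℂ) * I * (x : ℂ) * z)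

lemma c12_re (σ : ℝ) (u : ℂ) : (2 * (σ : ℂ) - 1 - u).re = 2 * σ - 1 - u.re := by simp
lemma c12_im (σ : ℝ) (u : ℂ) : (2 * (σ : ℂ) - 1 - u).im = -u.im := by simp

lemma norm_exp12 (x : ℝ) (z : ℂ) :
    ‖Complex.exp (2 * (π : ℂ) * I * (x : ℂ) * z)‖ = Real.exp (-(2 * π * x * z.im)) := by
  rw [Complex.norm_exp]
  congr 1
  simp [Complex.mul_re, Complex.mul_im]

lemma arg_bd {v : ℝ} (harg : |v| ≤ π / 2) (w : ℝ) :
    Real.exp (-(v * w)) ≤ Real.exp (π / 2 * |w|) := by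
  apply Real.exp_le_exp.2
  calc -(v * w) ≤ |v * w| := neg_le_abs _
    _ = |v| * |w| := abs_mul _ _
    _ ≤ π / 2 * |w| := by gcongr

-- norm of the cpow factor
lemma norm_cpow12 (σ : ℝ) (u : ℂ) {z : ℂ} (hz : z ≠ 0) (hre : 0 ≤ z.re) :
    ‖z ^ (2 * (σ : ℂ) - 1 - u)‖ ≤
      ‖z‖ ^ (2 * σ - 1 - u.re) * Real.exp (π / 2 * |u.im|) := by
  have harg : |Complex.arg z| ≤ π / 2 := Complex.abs_arg_le_pi_div_two_iff.2 hre
  rw [Complex.norm_cpow_of_ne_zero hz, c12_re, c12_im, div_eq_mul_inv,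
    ← Real.exp_neg]
  have := arg_bd harg (-u.im)
  rw [abs_neg] at this
  exact mul_le_mul_of_nonneg_left this (Real.rpow_nonneg (norm_nonneg z) _)

lemma norm_cpow12' (u : ℂ) {z : ℂ} (hre : 0 ≤ z.re) :
    ‖((1 : ℂ) + z) ^ (u - 1)‖ ≤
      ‖1 + z‖ ^ (u.re - 1) * Real.exp (π / 2 * |u.im|) := by
  have h1z : (0:ℝ) < (1 + z).re := by simp; linarith
  have h1zne : (1 : ℂ) + z ≠ 0 := fun h => by rw [h] at h1z; simp at h1z
  have harg : |Complex.arg (1 + z)| ≤ π / 2 := Complex.abs_arg_le_pi_div_two_iff.2 h1z.le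
  rw [Complex.norm_cpow_of_ne_zero h1zne, div_eq_mul_inv, ← Real.exp_neg]
  simp only [Complex.sub_re, Complex.sub_im, Complex.one_re, Complex.one_im, sub_zero]
  exact mul_le_mul_of_nonneg_left (arg_bd harg u.im) (Real.rpow_nonneg (norm_nonneg _) _)

lemma one_le_abs_one_add {z : ℂ} (hre : 0 ≤ z.re) : (1:ℝ) ≤ ‖1 + z‖ := by
  calc (1:ℝ) ≤ (1+z).re := by simp; exact hre
    _ ≤ ‖1+z‖ := Complex.re_le_norm _

-- master norm bound for z in the closed first quadrant minus 0
lemma norm_G12_le (σ : ℝ) (u : ℂ) (x : ℝ) (hu : u.re < 0) {z : ℂ} (hz : z ≠ 0)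
    (hre : 0 ≤ z.re) :
    ‖G12 σ u x z‖ ≤ Real.exp (π * |u.im|) * ‖z‖ ^ (2 * σ - 1 - u.re)
      * Real.exp (-(2 * π * x * z.im)) := by
  have h1 := norm_cpow12 σ u hz hre
  have h2 := norm_cpow12' u hre
  have h2' : ‖((1 : ℂ) + z) ^ (u - 1)‖ ≤ Real.exp (π / 2 * |u.im|) := by
    refine h2.trans ?_
    have : ‖1 + z‖ ^ (u.re - 1) ≤ 1 :=
      Real.rpow_le_one_of_one_le_of_nonpos (one_le_abs_one_add hre) (by linarith)
    nlinarith [Real.exp_pos (π / 2 * |u.im|), Real.rpow_nonneg (norm_nonneg (1+z)) (u.re - 1)]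
  rw [G12, norm_mul, norm_mul, norm_exp12]
  have hexp : Real.exp (π / 2 * |u.im|) * Real.exp (π / 2 * |u.im|) = Real.exp (π * |u.im|) := by
    rw [← Real.exp_add]; ring_nf
  have hmain := mul_le_mul_of_nonneg_right
    (mul_le_mul h1 h2' (norm_nonneg _) (by positivity)) (Real.exp_pos (-(2 * π * x * z.im))).le
  refine hmain.trans_eq ?_
  rw [mul_assoc (‖z‖ ^ _), hexp]; ring

-- exact norm on the positive real axis
lemma norm_G12_real (σ : ℝ) (u : ℂ) (x : ℝ) {t : ℝ} (ht : 0 < t) :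
    ‖G12 σ u x t‖ = t ^ (2 * σ - 1 - u.re) * (1 + t) ^ (u.re - 1) := by
  rw [G12, norm_mul, norm_mul, norm_exp12]
  have h1 : ((1:ℂ) + (t:ℂ)) = ((1 + t : ℝ) : ℂ) := by push_cast; ring
  rw [Complex.norm_cpow_eq_rpow_re_of_pos ht, h1,
    Complex.norm_cpow_eq_rpow_re_of_pos (by linarith), c12_re]
  simp

-- P3 : rpow bound
lemma rpow_abs_bd (a : ℝ) {v w s : ℝ} (hv : 0 < v) (hvw : v ≤ w) (hs : 0 < s) :
    ‖(v : ℂ) + (s : ℂ) * I‖ ^ a ≤ 2 ^ |a| * (1 + w ^ a) * (1 + s ^ a) := by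
  have habs_re : ((v:ℂ) + (s:ℂ)*I).re = v := by simp
  have habs_im : ((v:ℂ) + (s:ℂ)*I).im = s := by simp
  have habs_le : ‖(v:ℂ) + (s:ℂ)*I‖ ≤ v + s := by
    refine (Complex.norm_le_abs_re_add_abs_im _).trans_eq ?_
    rw [habs_re, habs_im, abs_of_pos hv, abs_of_pos hs]
  have habs_ge : s ≤ ‖(v:ℂ) + (s:ℂ)*I‖ := by
    have := Complex.abs_im_le_norm ((v:ℂ) + (s:ℂ)*I)
    rwa [habs_im, abs_of_pos hs] at this
  have h2 : (1:ℝ) ≤ 2 ^ |a| := Real.one_le_rpow one_le_two (abs_nonneg a)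
  rcases le_or_gt 0 a with ha | ha
  · rw [_root_.abs_of_nonneg ha]
    calc ‖(v:ℂ) + (s:ℂ)*I‖ ^ a ≤ (v + s) ^ a :=
          Real.rpow_le_rpow (norm_nonneg _) habs_le ha
      _ ≤ (2 * max w s) ^ a := by
          apply Real.rpow_le_rpow (by positivity) _ ha
          have h1 : v ≤ max w s := le_trans hvw (le_max_left _ _)
          have h2' : s ≤ max w s := le_max_right _ _
          linarith
      _ = 2 ^ a * max w s ^ a := Real.mul_rpow (by norm_num) (by positivity)
      _ ≤ 2 ^ a * ((1 + w ^ a) * (1 + s ^ a)) := by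
          apply mul_le_mul_of_nonneg_left _ (by positivity)
          have hw : (0:ℝ) ≤ w ^ a := Real.rpow_nonneg (by linarith) _
          have hsa : (0:ℝ) ≤ s ^ a := Real.rpow_nonneg hs.le _
          rcases le_total w s with h | h
          · rw [max_eq_right h]; nlinarith
          · rw [max_eq_left h]; nlinarith
      _ = 2 ^ a * (1 + w ^ a) * (1 + s ^ a) := by ring
  · calc ‖(v:ℂ) + (s:ℂ)*I‖ ^ a ≤ s ^ a :=
        Real.rpow_le_rpow_of_nonpos hs habs_ge ha.le
      _ ≤ 2 ^ |a| * (1 + w ^ a) * (1 + s ^ a) := by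
        have hw : (0:ℝ) ≤ w ^ a := Real.rpow_nonneg (by linarith) _
        have hsa : (0:ℝ) ≤ s ^ a := Real.rpow_nonneg hs.le _
        have key : (1:ℝ) * ((1 + w ^ a) * (1 + s ^ a)) ≤ 2 ^ |a| * ((1 + w ^ a) * (1 + s ^ a)) := by
          apply mul_le_mul_of_nonneg_right h2 (by positivity)
        nlinarith [mul_nonneg hw hsa]

lemma G12_diff (σ : ℝ) (u : ℂ) (x : ℝ) {z : ℂ} (hz : 0 < z.re) :
    DifferentiableAt ℂ (G12 σ u x) z := by
  have h1 : DifferentiableAt ℂ (fun z : ℂ => z ^ (2 * (σ : ℂ) - 1 - u)) z :=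
    differentiableAt_id.cpow (differentiableAt_const _) (Or.inl hz)
  have h2 : DifferentiableAt ℂ (fun z : ℂ => ((1:ℂ) + z) ^ (u - 1)) z := by
    refine DifferentiableAt.cpow ((differentiableAt_const _).add differentiableAt_id)
      (differentiableAt_const _) (Or.inl ?_)
    simp; linarith
  have h3 : DifferentiableAt ℂ (fun z : ℂ => Complex.exp (2 * (π : ℂ) * I * (x : ℂ) * z)) z :=
    ((differentiableAt_const _).mul differentiableAt_id).cexp
  exact (h1.mul h2).mul h3

lemma G12_contAt (σ : ℝ) (u : ℂ) (x : ℝ) {z : ℂ} (hz : 0 < z.re ∨ z.im ≠ 0) :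
    ContinuousAt (G12 σ u x) z := by
  have h1 : ContinuousAt (fun z : ℂ => z ^ (2 * (σ : ℂ) - 1 - u)) z := by
    apply continuousAt_id.cpow continuousAt_const hz
  have h2 : ContinuousAt (fun z : ℂ => ((1:ℂ) + z) ^ (u - 1)) z := by
    rcases hz with h | h
    · exact (continuousAt_const.add continuousAt_id).cpow continuousAt_const (Or.inl (by simp; linarith))
    · rcases eq_or_ne (1 + z).im 0 with h0 | h0
      · refine (continuousAt_const.add continuousAt_id).cpow continuousAt_const (Or.inl ?_)
        simp at h0; exact absurd h0 h
      · exact (continuousAt_const.add continuousAt_id).cpow continuousAt_const (Or.inr h0)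
  have h3 : ContinuousAt (fun z : ℂ => Complex.exp (2 * (π : ℂ) * I * (x : ℂ) * z)) z :=
    (continuousAt_const.mul continuousAt_id).cexp
  exact (h1.mul h2).mul h3

-- integrability of s ↦ (1+s^a) * exp (-(b*s)) on Ioi 0
lemma aux_int_bound {a b : ℝ} (ha : -1 < a) (hb : 0 < b) :
    IntegrableOn (fun s : ℝ => (1 + s ^ a) * Real.exp (-(b * s))) (Ioi 0) := by
  have h1 : IntegrableOn (fun s : ℝ => Real.exp (-(b * s))) (Ioi 0) := by
    simpa [neg_mul] using exp_neg_integrableOn_Ioi 0 hb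
  have h2 : IntegrableOn (fun s : ℝ => s ^ a * Real.exp (-(b * s))) (Ioi 0) := by
    have := integrableOn_rpow_mul_exp_neg_mul_rpow ha one_pos hb
    refine this.congr_fun (fun s hs => ?_) measurableSet_Ioi
    dsimp only; rw [Real.rpow_one, neg_mul]
  refine (h1.add h2).congr ?_
  filter_upwards [] with s
  simp only [Pi.add_apply]
  ring

-- integrability of G12 on vertical line re = v > 0
lemma G12_int_vert (σ : ℝ) (u : ℂ) (x : ℝ) (hσ1 : 1/4 < σ) (hu : u.re < 0) (hx : 0 < x)
    {v : ℝ} (hv : 0 < v) :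
    IntegrableOn (fun s : ℝ => G12 σ u x ((v : ℂ) + (s : ℂ) * I)) (Ioi 0) := by
  set a := 2 * σ - 1 - u.re with ha_def
  have ha : -1 < a := by rw [ha_def]; linarith
  have hmeas : AEStronglyMeasurable (fun s : ℝ => G12 σ u x ((v : ℂ) + (s : ℂ) * I))
      (volume.restrict (Ioi 0)) := by
    apply ContinuousOn.aestronglyMeasurable _ measurableSet_Ioi
    intro s hs
    apply ContinuousAt.continuousWithinAt
    have hc : ContinuousAt (fun s : ℝ => (v:ℂ) + (s:ℂ) * I) s := by fun_prop
    exact ContinuousAt.comp (x := s) (g := G12 σ u x) (f := fun s : ℝ => (v:ℂ) + (s:ℂ) * I)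
      (G12_contAt σ u x (Or.inl (by simp [hv]))) hc
  refine Integrable.mono' ((aux_int_bound ha (by positivity : (0:ℝ) < 2*π*x)).const_mul
    (Real.exp (π * |u.im|) * (2 ^ |a| * (1 + v ^ a)))) hmeas ?_
  filter_upwards [ae_restrict_mem measurableSet_Ioi] with s hs
  have hs' : (0:ℝ) < s := hs
  have hzne : ((v:ℂ) + (s:ℂ) * I) ≠ 0 := by
    intro h
    have : ((v:ℂ) + (s:ℂ)*I).re = 0 := by rw [h]; simp
    simp at this; linarith
  have hb := norm_G12_le σ u x hu hzne (by simp [hv.le])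
  have him : ((v:ℂ) + (s:ℂ)*I).im = s := by simp
  rw [him] at hb
  refine hb.trans ?_
  have hr := rpow_abs_bd a hv (le_refl v) hs'
  calc Real.exp (π * |u.im|) * ‖(v:ℂ) + (s:ℂ)*I‖ ^ a * Real.exp (-(2*π*x*s))
      ≤ Real.exp (π * |u.im|) * (2 ^ |a| * (1 + v ^ a) * (1 + s ^ a)) * Real.exp (-(2*π*x*s)) := by
        have := mul_le_mul_of_nonneg_left hr (Real.exp_pos (π * |u.im|)).le
        exact mul_le_mul_of_nonneg_right this (Real.exp_pos _).le
    _ = Real.exp (π * |u.im|) * (2 ^ |a| * (1 + v ^ a)) * ((1 + s ^ a) * Real.exp (-(2*π*x*s))) := by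
        ring

-- integrability of G12 on (0, ∞)
lemma G12_int_real (σ : ℝ) (u : ℂ) (x : ℝ) (hσ1 : 1/4 < σ) (hσ2 : σ < 1/2) (hu : u.re < 0) :
    IntegrableOn (fun t : ℝ => G12 σ u x t) (Ioi 0) := by
  set a := 2 * σ - 1 - u.re with ha_def
  have ha : -1 < a := by rw [ha_def]; linarith
  have hmeas : ∀ (S : Set ℝ), S ⊆ Ioi 0 → MeasurableSet S →
      AEStronglyMeasurable (fun t : ℝ => G12 σ u x t) (volume.restrict S) := by
    intro S hS hSm
    apply ContinuousOn.aestronglyMeasurable _ hSm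
    intro t ht
    apply ContinuousAt.continuousWithinAt
    exact (G12_contAt σ u x (Or.inl (by simpa using hS ht))).comp continuous_ofReal.continuousAt
  have hIoc : IntegrableOn (fun t : ℝ => G12 σ u x t) (Ioc 0 1) := by
    refine Integrable.mono' ((intervalIntegral.intervalIntegrable_rpow' ha (a := 0) (b := 1)).1) 
      (hmeas _ Ioc_subset_Ioi_self measurableSet_Ioc) ?_
    filter_upwards [ae_restrict_mem measurableSet_Ioc] with t ht
    rw [norm_G12_real σ u x ht.1]
    have h1 : (1 + t) ^ (u.re - 1) ≤ 1 :=
      Real.rpow_le_one_of_one_le_of_nonpos (by linarith [ht.1]) (by linarith)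
    have h2 : (0:ℝ) ≤ t ^ a := Real.rpow_nonneg ht.1.le _
    nlinarith [Real.rpow_nonneg ht.1.le a]
  have hIoi : IntegrableOn (fun t : ℝ => G12 σ u x t) (Ioi 1) := by
    refine Integrable.mono' (integrableOn_Ioi_rpow_of_lt (a := 2*σ - 2) (by linarith) one_pos)
      (hmeas _ (fun t ht => lt_trans zero_lt_one (show (1:ℝ) < t from ht)) measurableSet_Ioi) ?_
    filter_upwards [ae_restrict_mem measurableSet_Ioi] with t ht
    have ht1 : (1:ℝ) < t := ht
    have ht0 : (0:ℝ) < t := lt_trans one_pos ht1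
    rw [norm_G12_real σ u x ht0]
    have h1 : (1 + t) ^ (u.re - 1) ≤ t ^ (u.re - 1) :=
      Real.rpow_le_rpow_of_nonpos ht0 (by linarith) (by linarith)
    calc t ^ a * (1 + t) ^ (u.re - 1) ≤ t ^ a * t ^ (u.re - 1) := by
          exact mul_le_mul_of_nonneg_left h1 (Real.rpow_nonneg ht0.le _)
      _ = t ^ (2*σ - 2) := by
          rw [← Real.rpow_add ht0]; congr 1; rw [ha_def]; ring
  have : IntegrableOn (fun t : ℝ => G12 σ u x t) (Ioc 0 1 ∪ Ioi 1) := hIoc.union hIoi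
  refine this.mono_set ?_
  intro t ht
  rcases le_or_gt t 1 with h | h
  · exact Or.inl ⟨ht, h⟩
  · exact Or.inr h

lemma norm_G12_right (σ : ℝ) (u : ℂ) (x : ℝ) (hσ2 : σ < 1/2) (hu : u.re < 0)
    {r s : ℝ} (hr : 0 < r) (hs : 0 < s) :
    ‖G12 σ u x ((r : ℂ) + (s : ℂ) * I)‖ ≤
      Real.exp (π * |u.im|) * r ^ (2 * σ - 2) * Real.exp (-(2 * π * x * s)) := by
  set z : ℂ := (r : ℂ) + (s : ℂ) * I with hz_def
  have hre : z.re = r := by simp [hz_def]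
  have him : z.im = s := by simp [hz_def]
  have hrepos : 0 < z.re := by rw [hre]; exact hr
  have hzne : z ≠ 0 := fun h => by rw [h] at hrepos; simp at hrepos
  have hrabs : r ≤ ‖z‖ := by
    have := Complex.re_le_norm z; rwa [hre] at this
  have h1r : r ≤ ‖1 + z‖ := by
    have h := Complex.re_le_norm (1 + z)
    have : (1 + z).re = 1 + r := by simp [hz_def]
    rw [this] at h; linarith
  have hzle : ‖z‖ ≤ ‖1 + z‖ := by
    have h1 : ‖z‖ ^ 2 ≤ ‖1 + z‖ ^ 2 := by
      rw [Complex.sq_norm, Complex.sq_norm, Complex.normSq_apply, Complex.normSq_apply]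
      simp only [Complex.add_re, Complex.add_im, Complex.one_re, Complex.one_im]
      nlinarith [hrepos]
    nlinarith [norm_nonneg z, norm_nonneg (1+z)]
  set a := 2 * σ - 1 - u.re with ha_def
  have hkey : ‖z‖ ^ a * ‖1 + z‖ ^ (u.re - 1) ≤ r ^ (2 * σ - 2) := by
    rcases le_or_gt 0 a with ha | ha
    · calc ‖z‖ ^ a * ‖1 + z‖ ^ (u.re - 1)
          ≤ ‖1 + z‖ ^ a * ‖1 + z‖ ^ (u.re - 1) := by
            apply mul_le_mul_of_nonneg_right (Real.rpow_le_rpow (norm_nonneg _) hzle ha)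
              (Real.rpow_nonneg (norm_nonneg _) _)
        _ = ‖1 + z‖ ^ (2 * σ - 2) := by
            rw [← Real.rpow_add (by linarith : (0:ℝ) < ‖1+z‖)]
            congr 1; rw [ha_def]; ring
        _ ≤ r ^ (2 * σ - 2) := Real.rpow_le_rpow_of_nonpos hr h1r (by linarith)
    · calc ‖z‖ ^ a * ‖1 + z‖ ^ (u.re - 1)
          ≤ r ^ a * r ^ (u.re - 1) := by
            apply mul_le_mul (Real.rpow_le_rpow_of_nonpos hr hrabs ha.le)
              (Real.rpow_le_rpow_of_nonpos hr h1r (by linarith))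
              (Real.rpow_nonneg (norm_nonneg _) _) (Real.rpow_nonneg hr.le _)
        _ = r ^ (2 * σ - 2) := by
            rw [← Real.rpow_add hr]; congr 1; rw [ha_def]; ring
  have h1 := norm_cpow12 σ u hzne hrepos.le
  have h2 := norm_cpow12' u hrepos.le
  rw [G12, norm_mul, norm_mul, norm_exp12, him]
  have hexp : Real.exp (π / 2 * |u.im|) * Real.exp (π / 2 * |u.im|) = Real.exp (π * |u.im|) := by
    rw [← Real.exp_add]; ring_nf
  calc ‖z ^ (2 * (σ:ℂ) - 1 - u)‖ * ‖((1:ℂ) + z) ^ (u - 1)‖ * Real.exp (-(2*π*x*s))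
      ≤ ((‖z‖ ^ a * Real.exp (π/2 * |u.im|)) *
          (‖1+z‖ ^ (u.re - 1) * Real.exp (π/2 * |u.im|))) * Real.exp (-(2*π*x*s)) := by
        apply mul_le_mul_of_nonneg_right (mul_le_mul h1 h2 (norm_nonneg _) (by positivity))
          (Real.exp_pos _).le
    _ = (‖z‖ ^ a * ‖1+z‖ ^ (u.re - 1)) * Real.exp (π * |u.im|)
          * Real.exp (-(2*π*x*s)) := by rw [← hexp]; ring
    _ ≤ r ^ (2 * σ - 2) * Real.exp (π * |u.im|) * Real.exp (-(2*π*x*s)) := by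
        apply mul_le_mul_of_nonneg_right (mul_le_mul_of_nonneg_right hkey (Real.exp_pos _).le)
          (Real.exp_pos _).le
    _ = Real.exp (π * |u.im|) * r ^ (2 * σ - 2) * Real.exp (-(2*π*x*s)) := by ring

-- the finite-rectangle identity, after letting T → ∞
lemma G12_slice (σ : ℝ) (u : ℂ) (x : ℝ) (hσ1 : 1/4 < σ) (hσ2 : σ < 1/2) (hu : u.re < 0)
    (hx : 0 < x) {ε R : ℝ} (hε : 0 < ε) (hεR : ε ≤ R) :
    ∫ t in ε..R, G12 σ u x t =
      I • (∫ s in Ioi (0:ℝ), G12 σ u x ((ε : ℂ) + (s : ℂ) * I)) -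
      I • (∫ s in Ioi (0:ℝ), G12 σ u x ((R : ℂ) + (s : ℂ) * I)) := by
  set a := 2 * σ - 1 - u.re with ha_def
  have hR : 0 < R := lt_of_lt_of_le hε hεR
  -- rectangle identity for each T ≥ 0
  have hrect : ∀ T : ℝ, 0 ≤ T →
      ∫ t in ε..R, G12 σ u x t =
        (∫ t in ε..R, G12 σ u x ((t : ℂ) + (T : ℂ) * I)) -
        I • (∫ s in (0:ℝ)..T, G12 σ u x ((R : ℂ) + (s : ℂ) * I)) +
        I • (∫ s in (0:ℝ)..T, G12 σ u x ((ε : ℂ) + (s : ℂ) * I)) := by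
    intro T hT
    have hzre : ((ε:ℂ)).re = ε := by simp
    have hzim : ((ε:ℂ)).im = 0 := by simp
    have hwre : ((R:ℂ) + (T:ℂ)*I).re = R := by simp
    have hwim : ((R:ℂ) + (T:ℂ)*I).im = T := by simp
    have key := Complex.integral_boundary_rect_eq_zero_of_differentiable_on_off_countable
      (G12 σ u x) (ε:ℂ) ((R:ℂ) + (T:ℂ)*I) ∅ Set.countable_empty ?_ ?_
    · rw [hzre, hzim, hwre, hwim] at key
      have e1 : (∫ t in ε..R, G12 σ u x ((t:ℂ) + ((0:ℝ):ℂ) * I)) = ∫ t in ε..R, G12 σ u x t := by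
        apply intervalIntegral.integral_congr; intro t _; norm_num
      rw [e1] at key
      linear_combination key
    · -- continuity on the closed rectangle
      intro z hz
      rw [Complex.mem_reProdIm, hzre, hzim, hwre, hwim] at hz
      have hz1 : ε ≤ z.re := by
        have := hz.1; rw [Set.uIcc_of_le hεR] at this; exact this.1
      exact ((G12_diff σ u x (lt_of_lt_of_le hε hz1)).continuousAt).continuousWithinAt
    · intro z hz
      simp only [Set.mem_diff, Set.mem_empty_iff_false, not_false_iff, and_true] at hz
      rw [Complex.mem_reProdIm, hzre, hzim, hwre, hwim] at hz
      have hz1 : min ε R < z.re := hz.1.1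
      rw [min_eq_left hεR] at hz1
      exact G12_diff σ u x (lt_of_lt_of_le hε hz1.le)
  -- limits as T → ∞
  have hL : ∀ v : ℝ, 0 < v → Tendsto (fun T : ℝ => ∫ s in (0:ℝ)..T, G12 σ u x ((v:ℂ) + (s:ℂ)*I))
      atTop (𝓝 (∫ s in Ioi (0:ℝ), G12 σ u x ((v : ℂ) + (s : ℂ) * I))) := by
    intro v hv
    exact intervalIntegral_tendsto_integral_Ioi 0 (G12_int_vert σ u x hσ1 hu hx hv) tendsto_id
  have htop : Tendsto (fun T : ℝ => ∫ t in ε..R, G12 σ u x ((t : ℂ) + (T : ℂ) * I))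
      atTop (𝓝 0) := by
    apply squeeze_zero_norm' (a := fun T =>
      Real.exp (π * |u.im|) * (2 ^ |a| * (1 + R ^ a) * (1 + T ^ a)) * Real.exp (-(2*π*x*T)) * |R - ε|)
    · filter_upwards [eventually_gt_atTop (0:ℝ)] with T hT
      apply intervalIntegral.norm_integral_le_of_norm_le_const
      intro t ht
      rw [Set.uIoc_of_le hεR] at ht
      have ht0 : 0 < t := lt_of_lt_of_le hε ht.1.le
      have hzne : ((t:ℂ) + (T:ℂ)*I) ≠ 0 := by
        intro hc
        have : ((t:ℂ) + (T:ℂ)*I).re = 0 := by rw [hc]; simp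
        simp at this; linarith
      have hb := norm_G12_le σ u x hu hzne (by simp [ht0.le])
      have him : ((t:ℂ) + (T:ℂ)*I).im = T := by simp
      rw [him] at hb
      refine hb.trans ?_
      have hr := rpow_abs_bd a ht0 ht.2 hT
      apply mul_le_mul_of_nonneg_right _ (Real.exp_pos _).le
      exact mul_le_mul_of_nonneg_left hr (Real.exp_pos _).le
    · have h1 : Tendsto (fun T : ℝ => (1 + T ^ a) * Real.exp (-(2*π*x*T))) atTop (𝓝 0) := by
        have hA : Tendsto (fun T : ℝ => Real.exp (-(2*π*x)*T)) atTop (𝓝 0) := by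
          simpa [Real.rpow_zero] using
            tendsto_rpow_mul_exp_neg_mul_atTop_nhds_zero 0 (2*π*x) (by positivity)
        have hB := tendsto_rpow_mul_exp_neg_mul_atTop_nhds_zero a (2*π*x) (by positivity)
        have := hA.add hB
        rw [add_zero] at this
        refine this.congr (fun T => ?_)
        rw [neg_mul]; ring
      have := ((h1.const_mul (Real.exp (π * |u.im|) * (2 ^ |a| * (1 + R ^ a)))).mul_const |R - ε|)
      rw [mul_zero, zero_mul] at this
      refine this.congr (fun T => ?_)
      ring
  have hRHS : Tendsto (fun T : ℝ =>
      (∫ t in ε..R, G12 σ u x ((t : ℂ) + (T : ℂ) * I)) -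
        I • (∫ s in (0:ℝ)..T, G12 σ u x ((R : ℂ) + (s : ℂ) * I)) +
        I • (∫ s in (0:ℝ)..T, G12 σ u x ((ε : ℂ) + (s : ℂ) * I))) atTop
      (𝓝 (0 - I • (∫ s in Ioi (0:ℝ), G12 σ u x ((R : ℂ) + (s : ℂ) * I))
          + I • (∫ s in Ioi (0:ℝ), G12 σ u x ((ε : ℂ) + (s : ℂ) * I)))) := by
    exact (htop.sub ((hL R hR).const_smul I)).add ((hL ε hε).const_smul I)
  have hconst : Tendsto (fun _ : ℝ => ∫ t in ε..R, G12 σ u x t) atTop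
      (𝓝 (∫ t in ε..R, G12 σ u x t)) := tendsto_const_nhds
  have := tendsto_nhds_unique (hconst.congr' ?_) hRHS
  · rw [this]; ring
  · filter_upwards [eventually_ge_atTop (0:ℝ)] with T hT
    exact hrect T hT

lemma G12_halfline (σ : ℝ) (u : ℂ) (x : ℝ) (hσ1 : 1/4 < σ) (hσ2 : σ < 1/2) (hu : u.re < 0)
    (hx : 0 < x) {ε : ℝ} (hε : 0 < ε) :
    ∫ t in Ioi ε, G12 σ u x t =
      I • (∫ s in Ioi (0:ℝ), G12 σ u x ((ε : ℂ) + (s : ℂ) * I)) := by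
  have hLHS : Tendsto (fun R : ℝ => ∫ t in ε..R, G12 σ u x t) atTop
      (𝓝 (∫ t in Ioi ε, G12 σ u x t)) :=
    intervalIntegral_tendsto_integral_Ioi ε
      ((G12_int_real σ u x hσ1 hσ2 hu).mono_set (Ioi_subset_Ioi hε.le)) tendsto_id
  have hR0 : Tendsto (fun R : ℝ => I • (∫ s in Ioi (0:ℝ), G12 σ u x ((R : ℂ) + (s : ℂ) * I)))
      atTop (𝓝 0) := by
    set Jx : ℝ := ∫ s in Ioi (0:ℝ), Real.exp (-(2*π*x*s)) with hJ
    apply squeeze_zero_norm' (a := fun R : ℝ => Real.exp (π * |u.im|) * R ^ (2*σ-2) * Jx)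
    · filter_upwards [eventually_gt_atTop (0:ℝ)] with R hR
      rw [norm_smul, Complex.norm_I, one_mul]
      have hint : Integrable (fun s : ℝ => Real.exp (π * |u.im|) * R ^ (2*σ-2) *
          Real.exp (-(2*π*x*s))) (volume.restrict (Ioi 0)) := by
        have base : IntegrableOn (fun s : ℝ => Real.exp (-(2*π*x*s))) (Ioi 0) := by
          have := exp_neg_integrableOn_Ioi 0 (by positivity : (0:ℝ) < 2*π*x)
          refine this.congr_fun (fun s _ => ?_) measurableSet_Ioi
          dsimp only; rw [neg_mul]
        exact base.const_mul _
      have := norm_integral_le_of_norm_le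
        (f := fun s : ℝ => G12 σ u x ((R:ℂ)+(s:ℂ)*I)) hint ?_
      · refine this.trans_eq ?_
        rw [MeasureTheory.integral_const_mul, ← hJ]
      · filter_upwards [ae_restrict_mem measurableSet_Ioi] with s hs
        exact norm_G12_right σ u x hσ2 hu hR hs
    · have h1 : Tendsto (fun R : ℝ => R ^ (2*σ-2)) atTop (𝓝 0) := by
        have := tendsto_rpow_neg_atTop (y := 2 - 2*σ) (by linarith)
        refine this.congr (fun R => ?_); congr 1; ring
      have := (h1.const_mul (Real.exp (π * |u.im|))).mul_const Jx
      rw [mul_zero, zero_mul] at this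
      refine this.congr (fun R => ?_); ring
  have hRHS : Tendsto (fun R : ℝ =>
      I • (∫ s in Ioi (0:ℝ), G12 σ u x ((ε : ℂ) + (s : ℂ) * I)) -
      I • (∫ s in Ioi (0:ℝ), G12 σ u x ((R : ℂ) + (s : ℂ) * I))) atTop
      (𝓝 (I • (∫ s in Ioi (0:ℝ), G12 σ u x ((ε : ℂ) + (s : ℂ) * I)) - 0)) :=
    tendsto_const_nhds.sub hR0
  rw [sub_zero] at hRHS
  refine tendsto_nhds_unique (hLHS.congr' ?_) hRHS
  filter_upwards [eventually_ge_atTop ε] with R hR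
  exact G12_slice σ u x hσ1 hσ2 hu hx hε hR

lemma G12_rotate (σ : ℝ) (u : ℂ) (x : ℝ) (hσ1 : 1/4 < σ) (hσ2 : σ < 1/2) (hu : u.re < 0)
    (hx : 0 < x) :
    ∫ t in Ioi (0:ℝ), G12 σ u x t =
      I • (∫ s in Ioi (0:ℝ), G12 σ u x ((s : ℂ) * I)) := by
  set a := 2 * σ - 1 - u.re with ha_def
  set ε : ℕ → ℝ := fun n => 1 / ((n:ℝ) + 1) with hε_def
  have hεpos : ∀ n, 0 < ε n := fun n => by positivity
  have hεle1 : ∀ n, ε n ≤ 1 := fun n => by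
    rw [hε_def]
    rw [div_le_one (by positivity)]
    simp
  -- LHS limit
  have T1 : Tendsto (fun n : ℕ => ∫ t in Ioi (ε n), G12 σ u x t) atTop
      (𝓝 (∫ t in Ioi (0:ℝ), G12 σ u x t)) := by
    have hmono : Monotone (fun n : ℕ => Ioi (ε n)) := by
      intro n m hnm
      apply Ioi_subset_Ioi
      rw [hε_def]
      apply one_div_le_one_div_of_le (by positivity)
      simp [Nat.cast_le.2 hnm]
    have hunion : (⋃ n, Ioi (ε n)) = Ioi (0:ℝ) := by
      ext t
      simp only [mem_iUnion, mem_Ioi]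
      constructor
      · rintro ⟨n, hn⟩; exact lt_trans (hεpos n) hn
      · intro ht; exact exists_nat_one_div_lt ht
    have := tendsto_setIntegral_of_monotone (fun n => measurableSet_Ioi) hmono
      (by rw [hunion]; exact G12_int_real σ u x hσ1 hσ2 hu)
    rwa [hunion] at this
  -- RHS limit via dominated convergence
  have T2 : Tendsto (fun n : ℕ => ∫ s in Ioi (0:ℝ), G12 σ u x ((ε n : ℂ) + (s : ℂ) * I)) atTop
      (𝓝 (∫ s in Ioi (0:ℝ), G12 σ u x ((s : ℂ) * I))) := by
    apply tendsto_integral_of_dominated_convergence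
      (bound := fun s : ℝ => Real.exp (π * |u.im|) * (2 ^ |a| * 2) *
        ((1 + s ^ a) * Real.exp (-(2*π*x*s))))
    · intro n
      apply ContinuousOn.aestronglyMeasurable _ measurableSet_Ioi
      intro s hs
      apply ContinuousAt.continuousWithinAt
      have hc : ContinuousAt (fun s : ℝ => ((ε n : ℝ) : ℂ) + (s:ℂ) * I) s := by fun_prop
      exact ContinuousAt.comp (x := s) (g := G12 σ u x)
        (f := fun s : ℝ => ((ε n : ℝ):ℂ) + (s:ℂ) * I)
        (G12_contAt σ u x (Or.inl (by simp [hεpos n]))) hc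
    · exact (aux_int_bound (by rw [ha_def]; linarith) (by positivity : (0:ℝ) < 2*π*x)).const_mul _
    · intro n
      filter_upwards [ae_restrict_mem measurableSet_Ioi] with s hs
      have hs' : (0:ℝ) < s := hs
      have hzne : ((ε n : ℂ) + (s:ℂ) * I) ≠ 0 := by
        intro hc
        have : ((ε n :ℂ) + (s:ℂ)*I).re = 0 := by rw [hc]; simp
        simp at this; linarith [hεpos n]
      have hb := norm_G12_le σ u x hu hzne (by simp [(hεpos n).le])
      have him : ((ε n :ℂ) + (s:ℂ)*I).im = s := by simp
      rw [him] at hb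
      refine hb.trans ?_
      have hr := rpow_abs_bd a (hεpos n) (hεle1 n) hs'
      rw [Real.one_rpow] at hr
      calc Real.exp (π * |u.im|) * ‖(ε n :ℂ) + (s:ℂ)*I‖ ^ a * Real.exp (-(2*π*x*s))
          ≤ Real.exp (π * |u.im|) * (2 ^ |a| * (1+1) * (1 + s ^ a)) * Real.exp (-(2*π*x*s)) := by
            exact mul_le_mul_of_nonneg_right
              (mul_le_mul_of_nonneg_left hr (Real.exp_pos _).le) (Real.exp_pos _).le
        _ = Real.exp (π * |u.im|) * (2 ^ |a| * 2) * ((1 + s ^ a) * Real.exp (-(2*π*x*s))) := by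
            ring
    · filter_upwards [ae_restrict_mem measurableSet_Ioi] with s hs
      have hs' : (0:ℝ) < s := hs
      have hcont : ContinuousAt (G12 σ u x) ((s:ℂ) * I) := by
        apply G12_contAt
        right; simp [ne_of_gt hs']
      have hseq : Tendsto (fun n : ℕ => ((ε n : ℝ) : ℂ) + (s:ℂ) * I) atTop (𝓝 ((s:ℂ) * I)) := by
        have h0 : Tendsto (fun n : ℕ => (ε n : ℝ)) atTop (𝓝 0) :=
          tendsto_one_div_add_atTop_nhds_zero_nat
        have h1 : Tendsto (fun n : ℕ => ((ε n : ℝ) : ℂ)) atTop (𝓝 ((0:ℝ):ℂ)) :=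
          (Complex.continuous_ofReal.tendsto 0).comp h0
        have h2 : Tendsto (fun _ : ℕ => (s:ℂ) * I) atTop (𝓝 ((s:ℂ) * I)) := tendsto_const_nhds
        have := h1.add h2
        simpa using this
      exact hcont.tendsto.comp hseq
  have hid : ∀ n : ℕ, ∫ t in Ioi (ε n), G12 σ u x t =
      I • (∫ s in Ioi (0:ℝ), G12 σ u x ((ε n : ℂ) + (s : ℂ) * I)) :=
    fun n => G12_halfline σ u x hσ1 hσ2 hu hx (hεpos n)
  refine tendsto_nhds_unique (T1.congr hid) ((T2.const_smul I))

lemma G12_key_bound (σ : ℝ) (u : ℂ) (x : ℝ) (hσ1 : 1/4 < σ) (hσ2 : σ < 1/2) (hu : u.re < 0)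
    (hx : 0 < x) :
    ‖∫ t in Ioi (0:ℝ), G12 σ u x t‖ ≤
      Real.exp (π * |u.im|) * Real.Gamma (2*σ - u.re) * (1/(2*π*x)) ^ (2*σ - u.re) := by
  rw [G12_rotate σ u x hσ1 hσ2 hu hx, norm_smul, Complex.norm_I, one_mul]
  set a := 2 * σ - 1 - u.re with ha_def
  have hA : (0:ℝ) < 2*σ - u.re := by linarith
  have hr : (0:ℝ) < 2*π*x := by positivity
  have hint : Integrable (fun s : ℝ => Real.exp (π * |u.im|) *
      (s ^ a * Real.exp (-(2*π*x*s)))) (volume.restrict (Ioi 0)) := by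
    apply Integrable.const_mul
    have := integrableOn_rpow_mul_exp_neg_mul_rpow (p := 1) (s := a) (b := 2*π*x)
      (by rw [ha_def]; linarith) one_pos hr
    refine this.congr_fun (fun s _ => ?_) measurableSet_Ioi
    dsimp only; rw [Real.rpow_one, neg_mul]
  have hle := norm_integral_le_of_norm_le
    (f := fun s : ℝ => G12 σ u x ((s:ℂ) * I)) hint ?_
  · refine hle.trans ?_
    rw [MeasureTheory.integral_const_mul]
    have : ∫ s in Ioi (0:ℝ), s ^ a * Real.exp (-(2*π*x*s)) =
        (1/(2*π*x)) ^ (2*σ - u.re) * Real.Gamma (2*σ - u.re) := by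
      have := Real.integral_rpow_mul_exp_neg_mul_Ioi hA hr
      rw [← this]
      apply setIntegral_congr_fun measurableSet_Ioi
      intro s hs
      congr 2
      rw [ha_def]; ring
    rw [this]; exact le_of_eq (by ring)
  · filter_upwards [ae_restrict_mem measurableSet_Ioi] with s hs
    have hs' : (0:ℝ) < s := hs
    have hzne : ((s:ℂ) * I) ≠ 0 := by
      simp [Complex.ext_iff, ne_of_gt hs']
    have hre0 : ((s:ℂ) * I).re = 0 := by simp
    have hb := norm_G12_le σ u x hu hzne (by rw [hre0])
    have him : ((s:ℂ) * I).im = s := by simp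
    have habs : ‖(s:ℂ) * I‖ = s := by
      simp [abs_of_pos hs']
    rw [him, habs] at hb
    exact hb.trans_eq (by ring)

theorem stmt12 (σ : ℝ) (h1 : 1/4 < σ) (h2 : σ < 1/2)
    (h : ℂ → ℝ → ℂ)
    (hdef : ∀ u x, h u x = ∫ y : ℝ in Set.Ioi 0,
        (y : ℂ) ^ (2 * (σ : ℂ) - 1 - u) * ((1 : ℂ) + (y : ℂ)) ^ (u - 1)
          * Complex.exp (2 * (π : ℂ) * I * (x : ℂ) * (y : ℂ))) :
    ∀ K : Set ℂ, IsCompact K → (∀ u ∈ K, u.re < 0) →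
      ∃ C > 0, ∃ x₀ : ℝ, ∀ x ≥ x₀, ∀ u ∈ K, ‖h u x‖ ≤ C * x ^ (u.re - 2 * σ) := by
  intro K hK hKre
  set φ : ℂ → ℝ := fun u => Real.exp (π * |u.im|) * Real.Gamma (2*σ - u.re) *
    (2*π) ^ (u.re - 2*σ) with hφ_def
  have hφcont : ContinuousOn φ K := by
    intro u hu
    apply ContinuousAt.continuousWithinAt
    have hc1 : ContinuousAt (fun u : ℂ => Real.exp (π * |u.im|)) u :=
      (Real.continuous_exp.comp (continuous_const.mul
        (_root_.continuous_abs.comp Complex.continuous_im))).continuousAt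
    have hc2 : ContinuousAt (fun u : ℂ => Real.Gamma (2*σ - u.re)) u := by
      have hpos : (0:ℝ) < 2*σ - u.re := by
        have := hKre u hu; linarith
      have hG : ContinuousAt Real.Gamma (2*σ - u.re) := by
        apply (Real.differentiableAt_Gamma ?_).continuousAt
        intro m
        have : (0:ℝ) ≤ (m:ℝ) := Nat.cast_nonneg m
        intro hc; rw [hc] at hpos; linarith
      exact ContinuousAt.comp (x := u) (g := Real.Gamma) (f := fun u : ℂ => 2*σ - u.re) hG
        (by fun_prop)
    have hc3 : ContinuousAt (fun u : ℂ => (2*π) ^ (u.re - 2*σ)) u := by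
      have hb : (2*π : ℝ) ≠ 0 := by positivity
      exact ContinuousAt.comp (x := u) (g := ((2*π:ℝ) ^ ·)) (f := fun u : ℂ => u.re - 2*σ)
        (Real.continuousAt_const_rpow hb) (by fun_prop)
    exact (hc1.mul hc2).mul hc3
  obtain ⟨C₀, hC₀⟩ := hK.exists_bound_of_continuousOn hφcont
  refine ⟨max C₀ 1, lt_of_lt_of_le one_pos (le_max_right _ _), 1, ?_⟩
  intro x hx u hu
  have hx0 : (0:ℝ) < x := lt_of_lt_of_le one_pos hx
  have hu_re : u.re < 0 := hKre u hu
  have hkey := G12_key_bound σ u x h1 h2 hu_re hx0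
  have heq : h u x = ∫ t in Ioi (0:ℝ), G12 σ u x t := hdef u x
  rw [heq]
  refine hkey.trans ?_
  have hA : (0:ℝ) < 2*σ - u.re := by linarith
  have hrw : (1/(2*π*x)) ^ (2*σ - u.re) = (2*π) ^ (u.re - 2*σ) * x ^ (u.re - 2*σ) := by
    have e1 : (1/(2*π*x)) ^ (2*σ - u.re) = (2*π*x) ^ (u.re - 2*σ) := by
      rw [one_div, Real.inv_rpow (by positivity), ← Real.rpow_neg (by positivity)]
      congr 1; ring
    rw [e1, Real.mul_rpow (by positivity) hx0.le]
  rw [hrw]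
  have hφu : Real.exp (π * |u.im|) * Real.Gamma (2*σ - u.re) * (2*π) ^ (u.re - 2*σ) = φ u := rfl
  have hφle : φ u ≤ max C₀ 1 := by
    have := hC₀ u hu
    calc φ u ≤ ‖φ u‖ := le_abs_self _
      _ ≤ C₀ := this
      _ ≤ max C₀ 1 := le_max_left _ _
  calc Real.exp (π * |u.im|) * Real.Gamma (2*σ - u.re) * ((2*π) ^ (u.re - 2*σ) * x ^ (u.re - 2*σ))
      = φ u * x ^ (u.re - 2*σ) := by rw [← hφu]; ring
    _ ≤ max C₀ 1 * x ^ (u.re - 2*σ) :=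
        mul_le_mul_of_nonneg_right hφle (Real.rpow_nonneg hx0.le _)
end

section
/- Let f(x) = -2x·arcsinh(√(πk/(2x))) - 2πk·√(1/4 + x/(2πk)) + πk - π/4 for x > 0 and fixed k > 0. Then f''(x) > 0 for all x > 0, and f'(x) → 0⁻ as x → ∞; in particular f'(x) < 0 for all x > 0, so f' has no zero in any interval (T, 2T). -/
open Real Filter

lemma aux_hasDerivAt (k x : ℝ) (hk : 0 < k) (hx : 0 < x) :
    HasDerivAt (fun x => -2 * x * Real.arsinh (Real.sqrt (π * k / (2 * x)))
        - 2 * π * k * Real.sqrt (1/4 + x / (2 * π * k)) + π * k - π / 4)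
      (-2 * Real.arsinh (Real.sqrt (π * k / (2 * x)))) x := by
  have hπk : 0 < π * k := mul_pos Real.pi_pos hk
  have h2x : (0:ℝ) < 2 * x := by linarith
  have hin : 0 < π * k / (2 * x) := div_pos hπk h2x
  have h1 : HasDerivAt (fun y : ℝ => π * k / (2 * y))
      ((0 * (2 * x) - π * k * (2 * 1)) / (2 * x) ^ 2) x :=
    (hasDerivAt_const x (π * k)).div ((hasDerivAt_id x).const_mul 2) (ne_of_gt h2x)
  have h2 := h1.sqrt (ne_of_gt hin)
  have h3 := h2.arsinh
  have h4 := ((hasDerivAt_id x).mul h3).const_mul (-2 : ℝ)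
  have hin2 : 0 < 1/4 + x / (2 * π * k) := by positivity
  have h6 : HasDerivAt (fun y : ℝ => 1/4 + y / (2 * π * k)) (0 + 1 / (2 * π * k)) x :=
    (hasDerivAt_const x (1/4 : ℝ)).add ((hasDerivAt_id x).div_const (2 * π * k))
  have h7 := (h6.sqrt (ne_of_gt hin2)).const_mul (2 * π * k)
  have h8 := ((h4.sub h7).add_const (π * k)).sub_const (π / 4)
  have hfe : (fun x => -2 * x * Real.arsinh (Real.sqrt (π * k / (2 * x)))
        - 2 * π * k * Real.sqrt (1/4 + x / (2 * π * k)) + π * k - π / 4)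
      = (fun y => -2 * (y * Real.arsinh (Real.sqrt (π * k / (2 * y))))
        - 2 * π * k * Real.sqrt (1/4 + y / (2 * π * k)) + π * k - π / 4) := by
    funext y; ring
  rw [hfe]
  refine h8.congr_deriv ?_
  symm
  -- now the derivative value identity
  set A := Real.sqrt (π * k / (2 * x)) with hA
  have hA2 : A ^ 2 = π * k / (2 * x) := Real.sq_sqrt hin.le
  have hApos : 0 < A := Real.sqrt_pos.mpr hin
  have ha : (0:ℝ) < Real.sqrt (π * k) := Real.sqrt_pos.mpr hπk
  have hb : (0:ℝ) < Real.sqrt (2 * x) := Real.sqrt_pos.mpr h2x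
  have hd : (0:ℝ) < Real.sqrt (π * k + 2 * x) := Real.sqrt_pos.mpr (by linarith)
  have ha2 : Real.sqrt (π * k) ^ 2 = π * k := Real.sq_sqrt hπk.le
  have hb2 : Real.sqrt (2 * x) ^ 2 = 2 * x := Real.sq_sqrt h2x.le
  have hAv : A = Real.sqrt (π * k) / Real.sqrt (2 * x) := by
    rw [hA, Real.sqrt_div hπk.le]
  have hB : Real.sqrt (1 + A ^ 2) = Real.sqrt (π * k + 2 * x) / Real.sqrt (2 * x) := by
    rw [hA2, show 1 + π * k / (2 * x) = (π * k + 2 * x) / (2 * x) by field_simp; ring,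
      Real.sqrt_div (by linarith)]
  have hC : Real.sqrt (1/4 + x / (2 * π * k))
      = Real.sqrt (π * k + 2 * x) / (2 * Real.sqrt (π * k)) := by
    rw [show 1/4 + x / (2 * π * k) = (π * k + 2 * x) / (4 * (π * k)) by field_simp; ring,
      Real.sqrt_div (by linarith), show (4 : ℝ) * (π * k) = 2 ^ 2 * (π * k) by norm_num,
      Real.sqrt_mul (by positivity), Real.sqrt_sq (by norm_num)]
  rw [hB, hC, hAv, smul_eq_mul]
  field_simp
  ring_nf
  rw [Real.sq_sqrt hπk.le, Real.sq_sqrt (by linarith : (0:ℝ) ≤ x * 2), id_eq]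
  ring

theorem stmt14 (k : ℝ) (hk : 0 < k)
    (f : ℝ → ℝ)
    (hf : ∀ x, f x = -2 * x * Real.arsinh (Real.sqrt (π * k / (2 * x)))
        - 2 * π * k * Real.sqrt (1/4 + x / (2 * π * k)) + π * k - π / 4) :
    (∀ x > 0, 0 < deriv (deriv f) x) ∧
    Tendsto (deriv f) atTop (nhds 0) ∧
    ∀ x > 0, deriv f x < 0 := by
  have hπk : 0 < π * k := mul_pos Real.pi_pos hk
  have hfeq : f = fun x => -2 * x * Real.arsinh (Real.sqrt (π * k / (2 * x)))
        - 2 * π * k * Real.sqrt (1/4 + x / (2 * π * k)) + π * k - π / 4 := funext hf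
  set G : ℝ → ℝ := fun x => -2 * Real.arsinh (Real.sqrt (π * k / (2 * x))) with hG
  have hderiv : ∀ x > 0, deriv f x = G x := by
    intro x hx
    rw [hfeq]
    exact (aux_hasDerivAt k x hk hx).deriv
  have hGderiv : ∀ x > 0, HasDerivAt G
      (-2 * ((Real.sqrt (1 + (Real.sqrt (π * k / (2 * x))) ^ 2))⁻¹ •
        ((0 * (2 * x) - π * k * (2 * 1)) / (2 * x) ^ 2 / (2 * Real.sqrt (π * k / (2 * x)))))) x := by
    intro x hx
    have h2x : (0:ℝ) < 2 * x := by linarith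
    have hin : 0 < π * k / (2 * x) := div_pos hπk h2x
    have h1 : HasDerivAt (fun y : ℝ => π * k / (2 * y))
        ((0 * (2 * x) - π * k * (2 * 1)) / (2 * x) ^ 2) x :=
      (hasDerivAt_const x (π * k)).div ((hasDerivAt_id x).const_mul 2) (ne_of_gt h2x)
    exact ((h1.sqrt (ne_of_gt hin)).arsinh).const_mul (-2)
  refine ⟨?_, ?_, ?_⟩
  · intro x hx
    have hev : deriv f =ᶠ[nhds x] G := by
      filter_upwards [Ioi_mem_nhds hx] with y hy
      exact hderiv y hy
    rw [hev.deriv_eq, (hGderiv x hx).deriv]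
    have h2x : (0:ℝ) < 2 * x := by linarith
    have hin : 0 < π * k / (2 * x) := div_pos hπk h2x
    have hApos : 0 < Real.sqrt (π * k / (2 * x)) := Real.sqrt_pos.mpr hin
    have hnum : (0 * (2 * x) - π * k * (2 * 1)) / (2 * x) ^ 2 / (2 * Real.sqrt (π * k / (2 * x))) < 0 := by
      apply div_neg_of_neg_of_pos
      · apply div_neg_of_neg_of_pos
        · nlinarith
        · positivity
      · positivity
    have hB : 0 < (Real.sqrt (1 + (Real.sqrt (π * k / (2 * x))) ^ 2))⁻¹ := by positivity
    rw [smul_eq_mul]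
    nlinarith
  · have t1 : Tendsto (fun x : ℝ => π * k / (2 * x)) atTop (nhds 0) :=
      Filter.Tendsto.div_atTop tendsto_const_nhds (tendsto_id.const_mul_atTop (by norm_num))
    have t2 := ((Real.continuous_arsinh.comp Real.continuous_sqrt).tendsto 0).comp t1
    have t3 := t2.const_mul (-2 : ℝ)
    have t4 : Tendsto G atTop (nhds 0) := by
      simpa [Function.comp, Real.sqrt_zero, Real.arsinh_zero, hG] using t3
    have hev : G =ᶠ[atTop] deriv f := by
      filter_upwards [eventually_gt_atTop 0] with y hy
      exact (hderiv y hy).symm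
    exact Filter.Tendsto.congr' hev t4
  · intro x hx
    rw [hderiv x hx]
    have hin : 0 < π * k / (2 * x) := div_pos hπk (by linarith)
    have h1 : 0 < Real.arsinh (Real.sqrt (π * k / (2 * x))) :=
      Real.arsinh_pos_iff.mpr (Real.sqrt_pos.mpr hin)
    simp only [hG]
    nlinarith
end

section
/- For fixed real α and k > 0, ∫_T^{2T} exp(-i(2x·arcsinh(√(πk/(2x))) + 2πk√(1/4 + x/(2πk)) - πk + π/4)) / (x^α · arcsinh(√(πk/(2x))) · (1/4 + x/(2πk))^{1/4}) dx = O(T^{-α + 3/4}) as T → ∞. -/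
open Complex Real Filter Asymptotics

noncomputable section
namespace Stmt16
set_option linter.unusedSectionVars false

variable (α k : ℝ)

def uu (x : ℝ) : ℝ := Real.sqrt (π * k / (2 * x))
def aa (x : ℝ) : ℝ := Real.arsinh (uu k x)
def ss (x : ℝ) : ℝ := 1/4 + x / (2 * π * k)
def ph (x : ℝ) : ℝ := 2*x*aa k x + 2*π*k*Real.sqrt (ss k x) - π*k + π/4
def aa' (x : ℝ) : ℝ := -(uu k x) / (2*x*Real.sqrt (1 + uu k x^2))

def qq (x : ℝ) : ℝ := x ^ α * aa k x ^ 2 * ss k x ^ ((1:ℝ)/4)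

def qq' (x : ℝ) : ℝ :=
  (α * x ^ (α - 1) * aa k x ^ 2 + x ^ α * (2 * aa k x * aa' k x)) * ss k x ^ ((1:ℝ)/4)
    + x ^ α * aa k x ^ 2 * (1 / (2 * π * k) * ((1:ℝ)/4) * ss k x ^ ((1:ℝ)/4 - 1))

def hh (x : ℝ) : ℝ := (qq α k x)⁻¹

def hh' (x : ℝ) : ℝ := -(qq' α k x) / (qq α k x) ^ 2

def FF (x : ℝ) : ℂ := Complex.exp (-I * (ph k x : ℂ))

def GG (x : ℝ) : ℂ := FF k x * ((I/2) * (hh α k x : ℂ))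

def c1 : ℝ := π * k / 8 * (2*π*k) ^ (-(1:ℝ)/4)
def c2 : ℝ := 1/4 + 1/(2*π*k)
def c3 : ℝ := (|α|+1) * (π*k/2) * (c2 k) ^ ((1:ℝ)/4) + (2*π*k) ^ ((3:ℝ)/4) / 16

section Derivs
variable {k} (hk : 0 < k) {x : ℝ} (hx : 0 < x)
include hk hx

lemma pik_pos : 0 < π * k := mul_pos Real.pi_pos hk

lemma inner_pos : 0 < π * k / (2 * x) := div_pos (pik_pos hk hx) (by linarith)

lemma uu_pos : 0 < uu k x := Real.sqrt_pos.2 (inner_pos hk hx)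

lemma uu_sq : uu k x ^ 2 = π * k / (2 * x) := Real.sq_sqrt (inner_pos hk hx).le

lemma aa_pos : 0 < aa k x := Real.arsinh_pos_iff.2 (uu_pos hk hx)

lemma w_pos : 0 < Real.sqrt (1 + uu k x ^ 2) :=
  Real.sqrt_pos.2 (by positivity)

lemma hasDerivAt_uu : HasDerivAt (uu k) (-(uu k x) / (2*x)) x := by
  have h1 : HasDerivAt (fun y : ℝ => π * k / (2 * y)) (π * k / 2 * (-(x ^ 2)⁻¹)) x := by
    have h := (hasDerivAt_inv hx.ne').const_mul (π * k / 2)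
    refine h.congr_of_eventuallyEq (Filter.Eventually.of_forall fun y => ?_)
    ring
  have h2 := (Real.hasDerivAt_sqrt (inner_pos hk hx).ne').comp x h1
  have hu := uu_sq hk hx
  have hup := uu_pos hk hx
  refine h2.congr_deriv ?_
  symm
  change -(uu k x)/(2*x) = 1 / (2 * uu k x) * (π * k / 2 * -(x ^ 2)⁻¹)
  have hpk : π * k = uu k x ^ 2 * (2 * x) := by
    rw [hu]; field_simp
  rw [hpk]
  field_simp

lemma hasDerivAt_aa : HasDerivAt (aa k) (aa' k x) x := by
  have h := (Real.hasDerivAt_arsinh (uu k x)).comp x (hasDerivAt_uu hk hx)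
  refine h.congr_deriv ?_
  symm
  unfold aa'
  have hw := (w_pos hk hx).ne'
  field_simp


lemma ss_pos : 0 < ss k x := by
  have h := pik_pos hk hx
  unfold ss
  positivity

lemma sqrt_ss_eq : Real.sqrt (ss k x) = Real.sqrt (1 + uu k x ^ 2) / (2 * uu k x) := by
  have hu := uu_sq hk hx
  have hup := uu_pos hk hx
  have hpk := pik_pos hk hx
  have hss : ss k x = (1 + uu k x ^ 2) / (2 * uu k x) ^ 2 := by
    unfold ss
    rw [eq_div_iff (by positivity)]
    have h4 : (2 * uu k x) ^ 2 = 4 * (π * k / (2 * x)) := by rw [← hu]; ring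
    rw [h4]
    rw [hu]
    field_simp
    ring
  rw [hss, Real.sqrt_div (by positivity), Real.sqrt_sq (by positivity)]

lemma hasDerivAt_ss : HasDerivAt (ss k) (1 / (2 * π * k)) x := by
  unfold ss
  exact ((hasDerivAt_id x).div_const (2 * π * k)).const_add (1/4 : ℝ)

lemma hasDerivAt_ph : HasDerivAt (ph k) (2 * aa k x) x := by
  have hpk := pik_pos hk hx
  have hup := uu_pos hk hx
  have hw := w_pos hk hx
  have p1 : HasDerivAt (fun y : ℝ => 2 * y * aa k y) (2 * aa k x + 2 * x * aa' k x) x := by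
    have := ((hasDerivAt_id x).const_mul 2).mul (hasDerivAt_aa hk hx)
    refine this.congr_deriv ?_
    simp
  have p2 : HasDerivAt (fun y : ℝ => Real.sqrt (ss k y))
      (1 / (2 * Real.sqrt (ss k x)) * (1 / (2 * π * k))) x :=
    (Real.hasDerivAt_sqrt (ss_pos hk hx).ne').comp x (hasDerivAt_ss hk hx)
  have p3 : HasDerivAt (ph k)
      (2 * aa k x + 2 * x * aa' k x
        + 2 * π * k * (1 / (2 * Real.sqrt (ss k x)) * (1 / (2 * π * k)))) x := by
    unfold ph
    exact ((p1.add (p2.const_mul (2 * π * k))).sub_const (π * k)).add_const (π / 4)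
  convert p3 using 1
  rw [sqrt_ss_eq hk hx]
  unfold aa'
  field_simp
  ring

lemma qq_pos : 0 < qq α k x := by
  have h1 := aa_pos hk hx
  have h2 := ss_pos hk hx
  unfold qq
  positivity

lemma hasDerivAt_qq : HasDerivAt (qq α k) (qq' α k x) x := by
  have h1 : HasDerivAt (fun y : ℝ => y ^ α) (α * x ^ (α - 1)) x :=
    Real.hasDerivAt_rpow_const (Or.inl hx.ne')
  have h2 : HasDerivAt (fun y => aa k y ^ 2) (2 * aa k x * aa' k x) x := by
    have := (hasDerivAt_aa hk hx).pow 2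
    refine this.congr_deriv ?_
    norm_num
  have h3 : HasDerivAt (fun y => ss k y ^ ((1:ℝ)/4))
      (1 / (2 * π * k) * ((1:ℝ)/4) * ss k x ^ ((1:ℝ)/4 - 1)) x :=
    (hasDerivAt_ss hk hx).rpow_const (Or.inl (ss_pos hk hx).ne')
  have := (h1.mul h2).mul h3
  exact this

lemma hasDerivAt_hh : HasDerivAt (hh α k) (hh' α k x) x :=
  (hasDerivAt_qq α hk hx).inv (qq_pos α hk hx).ne'

lemma hasDerivAt_FF : HasDerivAt (FF k) (-2 * I * (aa k x : ℂ) * FF k x) x := by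
  have hph : HasDerivAt (fun y => ((ph k y : ℝ) : ℂ)) ((2 * aa k x : ℝ) : ℂ) x :=
    (hasDerivAt_ph hk hx).ofReal_comp
  have := (hph.const_mul (-I)).cexp
  refine this.congr_deriv ?_
  symm
  unfold FF
  push_cast
  ring

lemma hasDerivAt_GG : HasDerivAt (GG α k)
    (((aa k x * hh α k x : ℝ) : ℂ) * FF k x + (I/2) * (hh' α k x : ℂ) * FF k x) x := by
  have h2 : HasDerivAt (fun y => (I/2) * (hh α k y : ℂ)) ((I/2) * (hh' α k x : ℂ)) x :=
    ((hasDerivAt_hh α hk hx).ofReal_comp).const_mul (I/2)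
  have := (hasDerivAt_FF hk hx).mul h2
  refine this.congr_deriv ?_
  symm
  have hI := Complex.I_sq
  push_cast
  linear_combination ((aa k x : ℂ) * (hh α k x : ℂ) * FF k x) * hI

lemma integrand_eq :
    Complex.exp (-I * ((2 * x * Real.arsinh (Real.sqrt (π * k / (2 * x)))
            + 2 * π * k * Real.sqrt (1/4 + x / (2 * π * k)) - π * k + π / 4 : ℝ) : ℂ)) /
          ((x ^ α * Real.arsinh (Real.sqrt (π * k / (2 * x)))
            * (1/4 + x / (2 * π * k)) ^ ((1:ℝ)/4) : ℝ) : ℂ)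
      = ((aa k x * hh α k x : ℝ) : ℂ) * FF k x := by
  have ha := aa_pos hk hx
  have hs := ss_pos hk hx
  have hxa : (0:ℝ) < x ^ α := Real.rpow_pos_of_pos hx α
  have hss : (0:ℝ) < ss k x ^ ((1:ℝ)/4) := Real.rpow_pos_of_pos hs _
  have key : aa k x * hh α k x
      = (x ^ α * Real.arsinh (Real.sqrt (π * k / (2 * x)))
            * (1/4 + x / (2 * π * k)) ^ ((1:ℝ)/4))⁻¹ := by
    unfold hh qq
    have haa : aa k x = Real.arsinh (Real.sqrt (π * k / (2 * x))) := rfl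
    have hsss : ss k x = 1/4 + x / (2 * π * k) := rfl
    rw [← haa, ← hsss]
    field_simp
  rw [show (FF k x : ℂ) = Complex.exp (-I * ((2 * x * Real.arsinh (Real.sqrt (π * k / (2 * x)))
            + 2 * π * k * Real.sqrt (1/4 + x / (2 * π * k)) - π * k + π / 4 : ℝ) : ℂ)) from rfl,
    div_eq_mul_inv, key]
  push_cast
  ring

end Derivs

section Bounds

lemma sinh_le_two_mul {a : ℝ} (h0 : 0 ≤ a) (h1 : a ≤ 1) : Real.sinh a ≤ 2 * a := by
  have he : Real.exp a ≤ 1 + a + 3/4 * a^2 := by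
    have h := Real.exp_bound' h0 h1 (n := 2) (by norm_num)
    simp [Finset.sum_range_succ] at h
    convert h using 1
    norm_num
    ring
  have he2 : 1 - a ≤ Real.exp (-a) := by
    have := Real.add_one_le_exp (-a); linarith
  have haa : a^2 ≤ a := by nlinarith
  rw [Real.sinh_eq]
  linarith

variable {k : ℝ} (hk : 0 < k) {x : ℝ} (hx1 : 1 ≤ x) (hxk : π * k ≤ x)
include hk hx1 hxk

lemma hx0 : (0:ℝ) < x := lt_of_lt_of_le one_pos hx1

lemma uu_le_one : uu k x ≤ 1 := by
  have hx := hx0 hk hx1 hxk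
  have h : π * k / (2 * x) ≤ 1 := by
    rw [div_le_one (by linarith)]
    linarith
  calc uu k x ≤ Real.sqrt 1 := Real.sqrt_le_sqrt h
  _ = 1 := Real.sqrt_one

lemma aa_le_uu : aa k x ≤ uu k x := by
  have hx := hx0 hk hx1 hxk
  have h := Real.self_lt_sinh_iff.2 (aa_pos hk hx)
  rw [show Real.sinh (aa k x) = uu k x from Real.sinh_arsinh _] at h
  exact h.le

lemma uu_le_two_aa : uu k x ≤ 2 * aa k x := by
  have hx := hx0 hk hx1 hxk
  have h0 := (aa_pos hk hx).le
  have h1 : aa k x ≤ 1 := le_trans (aa_le_uu hk hx1 hxk) (uu_le_one hk hx1 hxk)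
  have h := sinh_le_two_mul h0 h1
  rwa [show Real.sinh (aa k x) = uu k x from Real.sinh_arsinh _] at h

lemma aa_sq_le : aa k x ^ 2 ≤ π * k / 2 * x⁻¹ := by
  have hx := hx0 hk hx1 hxk
  have h1 := aa_le_uu hk hx1 hxk
  have h2 := uu_sq hk hx
  have h0 := (aa_pos hk hx).le
  have hxne : x ≠ 0 := hx.ne'
  calc aa k x ^ 2 ≤ uu k x ^ 2 := pow_le_pow_left₀ h0 h1 2
  _ = π * k / (2 * x) := h2
  _ = π * k / 2 * x⁻¹ := by field_simp

lemma aa_sq_ge : π * k / 8 * x⁻¹ ≤ aa k x ^ 2 := by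
  have hx := hx0 hk hx1 hxk
  have h1 := uu_le_two_aa hk hx1 hxk
  have h2 := uu_sq hk hx
  have hxne : x ≠ 0 := hx.ne'
  have h3 : uu k x ^ 2 ≤ (2 * aa k x) ^ 2 := pow_le_pow_left₀ (uu_pos hk hx).le h1 2
  rw [h2] at h3
  have h4 : π * k / (2 * x) = 4 * (π * k / 8 * x⁻¹) := by field_simp; ring
  nlinarith [h3, h4]

lemma abs_aa' : |aa' k x| ≤ uu k x / 2 * x⁻¹ := by
  have hx := hx0 hk hx1 hxk
  have hu := uu_pos hk hx
  have hw1 : 1 ≤ Real.sqrt (1 + uu k x ^ 2) := by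
    calc (1:ℝ) = Real.sqrt 1 := by simp
    _ ≤ Real.sqrt (1 + uu k x ^ 2) := Real.sqrt_le_sqrt (by nlinarith)
  have hw0 : 0 < Real.sqrt (1 + uu k x ^ 2) := lt_of_lt_of_le one_pos hw1
  unfold aa'
  rw [abs_div, abs_neg, _root_.abs_of_nonneg hu.le, _root_.abs_of_nonneg (by positivity)]
  rw [div_le_iff₀ (by positivity)]
  have : uu k x * 1 ≤ uu k x * Real.sqrt (1 + uu k x ^ 2) := by
    apply mul_le_mul_of_nonneg_left hw1 hu.le
  calc uu k x = uu k x * 1 := by ring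
  _ ≤ uu k x * Real.sqrt (1 + uu k x ^ 2) := this
  _ ≤ uu k x / 2 * x⁻¹ * (2 * x * Real.sqrt (1 + uu k x ^ 2)) := by
      rw [show uu k x / 2 * x⁻¹ * (2 * x * Real.sqrt (1 + uu k x ^ 2))
        = uu k x * Real.sqrt (1 + uu k x ^ 2) * (x * x⁻¹) by ring, mul_inv_cancel₀ hx.ne']
      ring_nf
      exact le_refl _

lemma c1_pos : 0 < c1 k := by
  have := Real.pi_pos
  unfold c1
  positivity

lemma c2_pos : 0 < c2 k := by
  have := Real.pi_pos
  unfold c2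
  positivity

lemma c3_pos (α : ℝ) : 0 < c3 α k := by
  have := Real.pi_pos
  have h2 := c2_pos (k := k) hk (x := x) hx1 hxk
  unfold c3
  positivity

lemma ss_ge' : x / (2*π*k) ≤ ss k x := by
  unfold ss; linarith

lemma ss_le' : ss k x ≤ c2 k * x := by
  have hpk := mul_pos Real.pi_pos hk
  unfold ss c2
  have h14 : (1:ℝ)/4 ≤ x/4 := by linarith
  have : x / (2*π*k) = 1/(2*π*k) * x := by ring
  nlinarith

lemma ss_q_ge : (2*π*k) ^ (-(1:ℝ)/4) * x ^ ((1:ℝ)/4) ≤ ss k x ^ ((1:ℝ)/4) := by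
  have hx := hx0 hk hx1 hxk
  have hc : (0:ℝ) < 2*π*k := by have := Real.pi_pos; positivity
  have e1 : (x / (2*π*k)) ^ ((1:ℝ)/4) = (2*π*k) ^ (-(1:ℝ)/4) * x ^ ((1:ℝ)/4) := by
    rw [Real.div_rpow hx.le hc.le, show (-(1:ℝ)/4) = -((1:ℝ)/4) by norm_num,
      Real.rpow_neg hc.le, div_eq_mul_inv]
    ring
  rw [← e1]
  exact Real.rpow_le_rpow (by positivity) (ss_ge' hk hx1 hxk) (by norm_num)

lemma ss_q_le : ss k x ^ ((1:ℝ)/4) ≤ (c2 k) ^ ((1:ℝ)/4) * x ^ ((1:ℝ)/4) := by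
  have hx := hx0 hk hx1 hxk
  have hc2 := c2_pos (k := k) hk (x := x) hx1 hxk
  have := (ss_pos hk hx).le
  calc ss k x ^ ((1:ℝ)/4) ≤ (c2 k * x) ^ ((1:ℝ)/4) :=
        Real.rpow_le_rpow this (ss_le' hk hx1 hxk) (by norm_num)
  _ = (c2 k) ^ ((1:ℝ)/4) * x ^ ((1:ℝ)/4) := Real.mul_rpow hc2.le hx.le

lemma ss_q_neg : ss k x ^ ((1:ℝ)/4 - 1) ≤ (2*π*k) ^ ((3:ℝ)/4) * x ^ (-(3:ℝ)/4) := by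
  have hx := hx0 hk hx1 hxk
  have hc : (0:ℝ) < 2*π*k := by have := Real.pi_pos; positivity
  have h34 : ((1:ℝ)/4 - 1) = -((3:ℝ)/4) := by norm_num
  have e1 : (x / (2*π*k)) ^ (-((3:ℝ)/4)) = (2*π*k) ^ ((3:ℝ)/4) * x ^ (-(3:ℝ)/4) := by
    rw [Real.div_rpow hx.le hc.le, Real.rpow_neg hx.le, Real.rpow_neg hc.le,
      show -(3:ℝ)/4 = -((3:ℝ)/4) by norm_num, Real.rpow_neg hx.le, div_eq_mul_inv, inv_inv]
    ring
  rw [h34, ← e1]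
  exact Real.rpow_le_rpow_of_nonpos (by positivity) (ss_ge' hk hx1 hxk) (by norm_num)

lemma qq_ge {α : ℝ} : c1 k * x ^ (α - 3/4) ≤ qq α k x := by
  have hx := hx0 hk hx1 hxk
  have hcomb : x ^ α * x⁻¹ * x ^ ((1:ℝ)/4) = x ^ (α - 3/4) := by
    rw [← Real.rpow_neg_one x, ← Real.rpow_add hx, ← Real.rpow_add hx]
    congr 1
    ring
  have step : x ^ α * (π*k/8*x⁻¹) * ((2*π*k) ^ (-(1:ℝ)/4) * x ^ ((1:ℝ)/4)) ≤ qq α k x := by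
    unfold qq
    have h1 := aa_sq_ge hk hx1 hxk
    have h2 := ss_q_ge hk hx1 hxk
    have hpos1 : (0:ℝ) ≤ x ^ α := (Real.rpow_pos_of_pos hx α).le
    have := Real.pi_pos
    gcongr
  calc c1 k * x ^ (α - 3/4) = x ^ α * (π*k/8*x⁻¹) * ((2*π*k) ^ (-(1:ℝ)/4) * x ^ ((1:ℝ)/4)) := by
        rw [← hcomb]; unfold c1; ring
  _ ≤ qq α k x := step

lemma abs_hh_le {α : ℝ} : |hh α k x| ≤ (c1 k)⁻¹ * x ^ ((3:ℝ)/4 - α) := by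
  have hx := hx0 hk hx1 hxk
  have hq := qq_pos α hk hx
  have hc1 := c1_pos (k := k) hk (x := x) hx1 hxk
  have hxp : (0:ℝ) < x ^ (α - 3/4) := Real.rpow_pos_of_pos hx _
  have h := qq_ge (α := α) hk hx1 hxk
  have : |hh α k x| = (qq α k x)⁻¹ := by
    unfold hh
    exact _root_.abs_of_nonneg (by positivity)
  rw [this]
  calc (qq α k x)⁻¹ ≤ (c1 k * x ^ (α - 3/4))⁻¹ := by
        apply inv_anti₀ (by positivity) h
  _ = (c1 k)⁻¹ * x ^ ((3:ℝ)/4 - α) := by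
        rw [mul_inv, ← Real.rpow_neg hx.le]
        congr 2
        ring

lemma abs_qq'_le {α : ℝ} : |qq' α k x| ≤ c3 α k * x ^ (α - 7/4) := by
  have hx := hx0 hk hx1 hxk
  have hpi := Real.pi_pos
  have hxa : (0:ℝ) < x ^ α := Real.rpow_pos_of_pos hx α
  have hc2 := c2_pos (k := k) hk (x := x) hx1 hxk
  have ha := aa_pos hk hx
  have hu := uu_pos hk hx
  have hss := ss_pos hk hx
  have hx1' : x ^ (α - 1) = x ^ α * x⁻¹ := by
    rw [show α - 1 = α + (-1) by ring, Real.rpow_add hx, Real.rpow_neg_one]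
  have comb1 : x ^ α * x⁻¹ * x⁻¹ * x ^ ((1:ℝ)/4) = x ^ (α - 7/4) := by
    rw [← Real.rpow_neg_one x, ← Real.rpow_add hx, ← Real.rpow_add hx, ← Real.rpow_add hx]
    congr 1
    ring
  have comb2 : x ^ α * x⁻¹ * x ^ (-(3:ℝ)/4) = x ^ (α - 7/4) := by
    rw [← Real.rpow_neg_one x, ← Real.rpow_add hx, ← Real.rpow_add hx]
    congr 1
    ring
  have haau : aa k x * |aa' k x| ≤ (π*k/4) * x⁻¹ * x⁻¹ := by
    have h1 := abs_aa' hk hx1 hxk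
    have h2 := aa_le_uu hk hx1 hxk
    have h3 := uu_sq hk hx
    have : aa k x * |aa' k x| ≤ uu k x * (uu k x / 2 * x⁻¹) := by
      apply mul_le_mul h2 h1 (abs_nonneg _) hu.le
    calc aa k x * |aa' k x| ≤ uu k x * (uu k x / 2 * x⁻¹) := this
    _ = uu k x ^ 2 / 2 * x⁻¹ := by ring
    _ = (π*k/4) * x⁻¹ * x⁻¹ := by
        rw [h3]
        ring
  -- t1 + t2 bound
  have hA : |(α * x ^ (α-1) * aa k x ^ 2 + x ^ α * (2 * aa k x * aa' k x))|
      ≤ (|α| + 1) * (π*k/2) * (x ^ α * x⁻¹ * x⁻¹) := by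
    calc |(α * x ^ (α-1) * aa k x ^ 2 + x ^ α * (2 * aa k x * aa' k x))|
        ≤ |α * x ^ (α-1) * aa k x ^ 2| + |x ^ α * (2 * aa k x * aa' k x)| := abs_add_le _ _
    _ = |α| * x ^ (α-1) * aa k x ^ 2 + x ^ α * (2 * aa k x * |aa' k x|) := by
        rw [abs_mul, abs_mul, abs_mul, abs_mul, abs_mul]
        rw [_root_.abs_of_nonneg (Real.rpow_pos_of_pos hx (α-1)).le,
          _root_.abs_of_nonneg (sq_nonneg (aa k x)), _root_.abs_of_nonneg hxa.le,
          _root_.abs_of_nonneg (by norm_num : (0:ℝ) ≤ 2), _root_.abs_of_nonneg ha.le]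
    _ ≤ |α| * (x ^ α * x⁻¹) * (π*k/2*x⁻¹) + x ^ α * (2 * ((π*k/4) * x⁻¹ * x⁻¹)) := by
        rw [hx1']
        have b1 := aa_sq_le hk hx1 hxk
        have b2 := haau
        have : x ^ α * (2 * aa k x * |aa' k x|) = x ^ α * (2 * (aa k x * |aa' k x|)) := by ring
        rw [this]
        gcongr
    _ = (|α| + 1) * (π*k/2) * (x ^ α * x⁻¹ * x⁻¹) := by ring
  have hT3 : |x ^ α * aa k x ^ 2 * (1 / (2 * π * k) * ((1:ℝ)/4) * ss k x ^ ((1:ℝ)/4 - 1))|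
      ≤ (2*π*k) ^ ((3:ℝ)/4) / 16 * x ^ (α - 7/4) := by
    have hssq : (0:ℝ) < ss k x ^ ((1:ℝ)/4 - 1) := Real.rpow_pos_of_pos hss _
    rw [_root_.abs_of_nonneg (by positivity)]
    have b1 := aa_sq_le hk hx1 hxk
    have b2 := ss_q_neg hk hx1 hxk
    calc x ^ α * aa k x ^ 2 * (1 / (2 * π * k) * ((1:ℝ)/4) * ss k x ^ ((1:ℝ)/4 - 1))
        ≤ x ^ α * (π*k/2*x⁻¹) * (1 / (2 * π * k) * ((1:ℝ)/4) * ((2*π*k) ^ ((3:ℝ)/4) * x ^ (-(3:ℝ)/4))) := by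
          gcongr
    _ = (2*π*k) ^ ((3:ℝ)/4) / 16 * (x ^ α * x⁻¹ * x ^ (-(3:ℝ)/4)) := by
          field_simp
          ring
    _ = (2*π*k) ^ ((3:ℝ)/4) / 16 * x ^ (α - 7/4) := by rw [comb2]
  have hssq4 : (0:ℝ) < ss k x ^ ((1:ℝ)/4) := Real.rpow_pos_of_pos hss _
  have hB : |(α * x ^ (α-1) * aa k x ^ 2 + x ^ α * (2 * aa k x * aa' k x)) * ss k x ^ ((1:ℝ)/4)|
      ≤ (|α| + 1) * (π*k/2) * (c2 k)^((1:ℝ)/4) * x ^ (α - 7/4) := by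
    rw [abs_mul, _root_.abs_of_nonneg hssq4.le]
    calc |(α * x ^ (α-1) * aa k x ^ 2 + x ^ α * (2 * aa k x * aa' k x))| * ss k x ^ ((1:ℝ)/4)
        ≤ ((|α| + 1) * (π*k/2) * (x ^ α * x⁻¹ * x⁻¹)) * ((c2 k)^((1:ℝ)/4) * x ^ ((1:ℝ)/4)) := by
          have := ss_q_le hk hx1 hxk
          gcongr
          all_goals first | exact hA | positivity
    _ = (|α| + 1) * (π*k/2) * (c2 k)^((1:ℝ)/4) * (x ^ α * x⁻¹ * x⁻¹ * x ^ ((1:ℝ)/4)) := by ring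
    _ = (|α| + 1) * (π*k/2) * (c2 k)^((1:ℝ)/4) * x ^ (α - 7/4) := by rw [comb1]
  unfold qq'
  calc |(α * x ^ (α-1) * aa k x ^ 2 + x ^ α * (2 * aa k x * aa' k x)) * ss k x ^ ((1:ℝ)/4)
      + x ^ α * aa k x ^ 2 * (1 / (2 * π * k) * ((1:ℝ)/4) * ss k x ^ ((1:ℝ)/4 - 1))|
      ≤ |(α * x ^ (α-1) * aa k x ^ 2 + x ^ α * (2 * aa k x * aa' k x)) * ss k x ^ ((1:ℝ)/4)|
        + |x ^ α * aa k x ^ 2 * (1 / (2 * π * k) * ((1:ℝ)/4) * ss k x ^ ((1:ℝ)/4 - 1))| := abs_add_le _ _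
  _ ≤ (|α| + 1) * (π*k/2) * (c2 k)^((1:ℝ)/4) * x ^ (α - 7/4)
        + (2*π*k) ^ ((3:ℝ)/4) / 16 * x ^ (α - 7/4) := add_le_add hB hT3
  _ = c3 α k * x ^ (α - 7/4) := by unfold c3; ring

lemma abs_hh'_le {α : ℝ} : |hh' α k x| ≤ c3 α k / (c1 k)^2 * x ^ (-α - 1/4) := by
  have hx := hx0 hk hx1 hxk
  have hq := qq_pos α hk hx
  have hc1 := c1_pos (k := k) hk (x := x) hx1 hxk
  have hc3 := c3_pos (k := k) hk (x := x) hx1 hxk α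
  have hqg := qq_ge (α := α) hk hx1 hxk
  have hq' := abs_qq'_le (α := α) hk hx1 hxk
  have hxp : (0:ℝ) < x ^ (α - 3/4) := Real.rpow_pos_of_pos hx _
  unfold hh'
  rw [abs_div, abs_neg, _root_.abs_of_nonneg (by positivity : (0:ℝ) ≤ qq α k x ^ 2)]
  have hden : (c1 k * x ^ (α - 3/4))^2 ≤ qq α k x ^ 2 := by
    apply pow_le_pow_left₀ (by positivity) hqg
  calc |qq' α k x| / qq α k x ^ 2 ≤ (c3 α k * x ^ (α - 7/4)) / ((c1 k * x ^ (α - 3/4))^2) := by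
        apply div_le_div₀ (by positivity) hq' (by positivity) hden
  _ = c3 α k / (c1 k)^2 * (x ^ (α - 7/4) * (x ^ (α - 3/4))⁻¹ * (x ^ (α - 3/4))⁻¹) := by
        field_simp
  _ = c3 α k / (c1 k)^2 * x ^ (-α - 1/4) := by
        congr 1
        rw [← Real.rpow_neg hx.le, ← Real.rpow_add hx, ← Real.rpow_add hx]
        congr 1
        ring

end Bounds

section Cont

variable {α k : ℝ} (hk : 0 < k) {x : ℝ} (hx : 0 < x)
include hk hx

lemma continuousAt_main : ContinuousAt (fun y => ((aa k y * hh α k y : ℝ) : ℂ) * FF k y) x := by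
  have h1 := (hasDerivAt_aa hk hx).continuousAt
  have h2 := (hasDerivAt_hh α hk hx).continuousAt
  have h3 := (hasDerivAt_FF hk hx).continuousAt
  exact (Complex.continuous_ofReal.continuousAt.comp (h1.mul h2)).mul h3

lemma continuousAt_corr : ContinuousAt (fun y => (I/2) * ((hh' α k y : ℝ) : ℂ) * FF k y) x := by
  have hu := (hasDerivAt_uu hk hx).continuousAt
  have haa := (hasDerivAt_aa hk hx).continuousAt
  have hss := (hasDerivAt_ss hk hx).continuousAt
  have hq := (hasDerivAt_qq α hk hx).continuousAt
  have hF := (hasDerivAt_FF hk hx).continuousAt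
  have hw : ContinuousAt (fun y => Real.sqrt (1 + uu k y ^ 2)) x :=
    Real.continuous_sqrt.continuousAt.comp (continuousAt_const.add (hu.pow 2))
  have hwne : 2 * x * Real.sqrt (1 + uu k x ^ 2) ≠ 0 := by
    have := w_pos hk hx
    positivity
  have haa' : ContinuousAt (aa' k) x := by
    unfold aa'
    exact (hu.neg).div ((continuousAt_const.mul continuousAt_id).mul hw) hwne
  have hxa : ContinuousAt (fun y : ℝ => y ^ α) x :=
    Real.continuousAt_rpow_const x α (Or.inl hx.ne')
  have hxa1 : ContinuousAt (fun y : ℝ => y ^ (α - 1)) x :=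
    Real.continuousAt_rpow_const x (α - 1) (Or.inl hx.ne')
  have hsq1 : ContinuousAt (fun y => ss k y ^ ((1:ℝ)/4)) x :=
    hss.rpow_const (Or.inl (ss_pos hk hx).ne')
  have hsq2 : ContinuousAt (fun y => ss k y ^ ((1:ℝ)/4 - 1)) x :=
    hss.rpow_const (Or.inl (ss_pos hk hx).ne')
  have hq' : ContinuousAt (qq' α k) x := by
    unfold qq'
    exact (((continuousAt_const.mul hxa1).mul (haa.pow 2)).add
      (hxa.mul ((continuousAt_const.mul haa).mul haa'))).mul hsq1 |>.add
      ((hxa.mul (haa.pow 2)).mul (continuousAt_const.mul hsq2))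
  have hh'c : ContinuousAt (hh' α k) x := by
    unfold hh'
    exact (hq'.neg).div (hq.pow 2) (pow_ne_zero 2 (qq_pos α hk hx).ne')
  exact (continuousAt_const.mul (Complex.continuous_ofReal.continuousAt.comp hh'c)).mul hF

end Cont

lemma rpow_le_two_rpow {β T y : ℝ} (hT : 0 < T) (h1 : T ≤ y) (h2 : y ≤ 2*T) :
    y ^ β ≤ 2 ^ |β| * T ^ β := by
  have hy : 0 < y := lt_of_lt_of_le hT h1
  have hTb : (0:ℝ) < T ^ β := Real.rpow_pos_of_pos hT β
  rcases le_or_gt 0 β with hb | hb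
  · calc y ^ β ≤ (2*T) ^ β := Real.rpow_le_rpow hy.le h2 hb
    _ = 2 ^ β * T ^ β := Real.mul_rpow (by norm_num) hT.le
    _ ≤ 2 ^ |β| * T ^ β := by
        gcongr
        · exact one_le_two
        · exact le_abs_self β
  · calc y ^ β ≤ T ^ β := Real.rpow_le_rpow_of_nonpos hT h1 hb.le
    _ = 1 * T ^ β := (one_mul _).symm
    _ ≤ 2 ^ |β| * T ^ β := by
        gcongr
        exact Real.one_le_rpow one_le_two (abs_nonneg β)

lemma norm_FF {k x : ℝ} : ‖FF k x‖ = 1 := by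
  unfold FF
  rw [Complex.norm_exp]
  simp

end Stmt16

open Stmt16

theorem stmt16 (α k : ℝ) (hk : 0 < k) :
    (fun T : ℝ => ∫ x in T..(2 * T),
        Complex.exp (-I * ((2 * x * Real.arsinh (Real.sqrt (π * k / (2 * x)))
            + 2 * π * k * Real.sqrt (1/4 + x / (2 * π * k)) - π * k + π / 4 : ℝ) : ℂ)) /
          ((x ^ α * Real.arsinh (Real.sqrt (π * k / (2 * x)))
            * (1/4 + x / (2 * π * k)) ^ ((1:ℝ)/4) : ℝ) : ℂ))
      =O[atTop] fun T : ℝ => T ^ (-α + 3/4) := by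
  rw [Asymptotics.isBigO_iff]
  refine ⟨(1/2) * (c1 k)⁻¹ * 2 ^ |3/4 - α| + (1/2) * (c1 k)⁻¹
    + (1/2) * (c3 α k / (c1 k)^2) * 2 ^ |(-α - 1/4 : ℝ)|, ?_⟩
  filter_upwards [eventually_ge_atTop (1:ℝ), eventually_ge_atTop (π*k)] with T hT1 hTk
  have hT0 : (0:ℝ) < T := lt_of_lt_of_le one_pos hT1
  have hTT : T ≤ 2*T := by linarith
  have hmem : ∀ x ∈ Set.uIcc T (2*T), 1 ≤ x ∧ π*k ≤ x := by
    intro x hx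
    rw [Set.uIcc_of_le hTT] at hx
    exact ⟨le_trans hT1 hx.1, le_trans hTk hx.1⟩
  have hmem0 : ∀ x ∈ Set.uIcc T (2*T), (0:ℝ) < x :=
    fun x hx => lt_of_lt_of_le one_pos (hmem x hx).1
  have hder : ∀ x ∈ Set.uIcc T (2*T), HasDerivAt (GG α k)
      ((fun x => ((aa k x * hh α k x : ℝ) : ℂ) * FF k x
        + (I/2) * ((hh' α k x : ℝ) : ℂ) * FF k x) x) x :=
    fun x hx => hasDerivAt_GG α hk (hmem0 x hx)
  have hcont_main : ContinuousOn (fun x => ((aa k x * hh α k x : ℝ) : ℂ) * FF k x)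
      (Set.uIcc T (2*T)) :=
    fun x hx => (continuousAt_main hk (hmem0 x hx)).continuousWithinAt
  have hcont_corr : ContinuousOn (fun x => (I/2) * ((hh' α k x : ℝ) : ℂ) * FF k x)
      (Set.uIcc T (2*T)) :=
    fun x hx => (continuousAt_corr hk (hmem0 x hx)).continuousWithinAt
  have hint_main := hcont_main.intervalIntegrable (μ := MeasureTheory.volume)
  have hint_corr := hcont_corr.intervalIntegrable (μ := MeasureTheory.volume)
  have hint : IntervalIntegrable (fun x => ((aa k x * hh α k x : ℝ) : ℂ) * FF k x
      + (I/2) * ((hh' α k x : ℝ) : ℂ) * FF k x) MeasureTheory.volume T (2*T) :=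
    hint_main.add hint_corr
  have key := intervalIntegral.integral_eq_sub_of_hasDerivAt hder hint
  have hadd := intervalIntegral.integral_add hint_main hint_corr
  have heq : (∫ x in T..(2 * T),
        Complex.exp (-I * ((2 * x * Real.arsinh (Real.sqrt (π * k / (2 * x)))
            + 2 * π * k * Real.sqrt (1/4 + x / (2 * π * k)) - π * k + π / 4 : ℝ) : ℂ)) /
          ((x ^ α * Real.arsinh (Real.sqrt (π * k / (2 * x)))
            * (1/4 + x / (2 * π * k)) ^ ((1:ℝ)/4) : ℝ) : ℂ))
      = (∫ x in T..(2*T), ((aa k x * hh α k x : ℝ) : ℂ) * FF k x) :=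
    intervalIntegral.integral_congr (fun x hx => integrand_eq α hk (hmem0 x hx))
  have hmainval : (∫ x in T..(2*T), ((aa k x * hh α k x : ℝ) : ℂ) * FF k x)
      = GG α k (2*T) - GG α k T
        - ∫ x in T..(2*T), (I/2) * ((hh' α k x : ℝ) : ℂ) * FF k x := by
    rw [key] at hadd
    rw [eq_sub_iff_add_eq]
    exact hadd.symm
  rw [heq, hmainval]
  -- norm bounds
  have hnormGG : ∀ y : ℝ, 1 ≤ y → π*k ≤ y →
      ‖GG α k y‖ ≤ (1/2) * (c1 k)⁻¹ * y ^ ((3:ℝ)/4 - α) := by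
    intro y h1 h2
    have habs := abs_hh_le (α := α) hk h1 h2
    have : ‖GG α k y‖ = (1/2) * |hh α k y| := by
      unfold GG
      rw [norm_mul, norm_FF, one_mul, norm_mul, Complex.norm_real, Real.norm_eq_abs]
      simp
    rw [this]
    calc (1/2) * |hh α k y| ≤ (1/2) * ((c1 k)⁻¹ * y ^ ((3:ℝ)/4 - α)) := by linarith
    _ = (1/2) * (c1 k)⁻¹ * y ^ ((3:ℝ)/4 - α) := by ring
  have hc1 : 0 < c1 k := c1_pos (k := k) hk (x := T) hT1 hTk
  have hGG2T : ‖GG α k (2*T)‖ ≤ (1/2) * (c1 k)⁻¹ * (2 ^ |(3:ℝ)/4 - α| * T ^ ((3:ℝ)/4 - α)) := by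
    have h := hnormGG (2*T) (by linarith) (by linarith)
    calc ‖GG α k (2*T)‖ ≤ (1/2) * (c1 k)⁻¹ * (2*T) ^ ((3:ℝ)/4 - α) := h
    _ ≤ (1/2) * (c1 k)⁻¹ * (2 ^ |(3:ℝ)/4 - α| * T ^ ((3:ℝ)/4 - α)) := by
        gcongr
        exact rpow_le_two_rpow hT0 hTT (le_refl _)
  have hGGT : ‖GG α k T‖ ≤ (1/2) * (c1 k)⁻¹ * T ^ ((3:ℝ)/4 - α) := hnormGG T hT1 hTk
  have hcorrPt : ∀ x ∈ Set.uIoc T (2*T),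
      ‖(I/2) * ((hh' α k x : ℝ) : ℂ) * FF k x‖
        ≤ (1/2) * (c3 α k / (c1 k)^2) * (2 ^ |(-α - 1/4 : ℝ)| * T ^ (-α - 1/4 : ℝ)) := by
    intro x hx
    rw [Set.uIoc_of_le hTT] at hx
    have hx1 : 1 ≤ x := le_trans hT1 hx.1.le
    have hxk : π*k ≤ x := le_trans hTk hx.1.le
    have habs := abs_hh'_le (α := α) hk hx1 hxk
    have hnorm : ‖(I/2) * ((hh' α k x : ℝ) : ℂ) * FF k x‖ = (1/2) * |hh' α k x| := by
      rw [norm_mul, norm_FF, mul_one, norm_mul, Complex.norm_real, Real.norm_eq_abs]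
      simp
    rw [hnorm]
    have hpow := rpow_le_two_rpow (β := (-α - 1/4 : ℝ)) hT0 hx.1.le hx.2
    have hc3 : 0 < c3 α k := c3_pos (k := k) hk (x := T) hT1 hTk α
    calc (1/2) * |hh' α k x| ≤ (1/2) * (c3 α k / (c1 k)^2 * x ^ (-α - 1/4 : ℝ)) := by linarith
    _ ≤ (1/2) * (c3 α k / (c1 k)^2) * (2 ^ |(-α - 1/4 : ℝ)| * T ^ (-α - 1/4 : ℝ)) := by
        rw [show (1/2 : ℝ) * (c3 α k / (c1 k)^2 * x ^ (-α - 1/4 : ℝ))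
          = (1/2) * (c3 α k / (c1 k)^2) * x ^ (-α - 1/4 : ℝ) by ring]
        gcongr
  have hcorrInt : ‖∫ x in T..(2*T), (I/2) * ((hh' α k x : ℝ) : ℂ) * FF k x‖
      ≤ ((1/2) * (c3 α k / (c1 k)^2) * (2 ^ |(-α - 1/4 : ℝ)| * T ^ (-α - 1/4 : ℝ))) * |2*T - T| :=
    intervalIntegral.norm_integral_le_of_norm_le_const hcorrPt
  rw [show |2*T - T| = T by rw [show 2*T - T = T by ring, abs_of_pos hT0]] at hcorrInt
  have hTpow : T ^ (-α - 1/4 : ℝ) * T = T ^ ((3:ℝ)/4 - α) := by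
    nth_rewrite 2 [← Real.rpow_one T]
    rw [← Real.rpow_add hT0]
    congr 1
    ring
  have hnormRHS : ‖T ^ (-α + 3/4 : ℝ)‖ = T ^ ((3:ℝ)/4 - α) := by
    rw [Real.norm_eq_abs, abs_of_pos (Real.rpow_pos_of_pos hT0 _)]
    congr 1
    ring
  rw [hnormRHS]
  calc ‖GG α k (2*T) - GG α k T - ∫ x in T..(2*T), (I/2) * ((hh' α k x : ℝ) : ℂ) * FF k x‖
      ≤ ‖GG α k (2*T) - GG α k T‖
        + ‖∫ x in T..(2*T), (I/2) * ((hh' α k x : ℝ) : ℂ) * FF k x‖ := norm_sub_le _ _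
  _ ≤ (‖GG α k (2*T)‖ + ‖GG α k T‖)
        + ‖∫ x in T..(2*T), (I/2) * ((hh' α k x : ℝ) : ℂ) * FF k x‖ := by
      gcongr
      exact norm_sub_le _ _
  _ ≤ ((1/2) * (c1 k)⁻¹ * (2 ^ |(3:ℝ)/4 - α| * T ^ ((3:ℝ)/4 - α))
        + (1/2) * (c1 k)⁻¹ * T ^ ((3:ℝ)/4 - α))
        + ((1/2) * (c3 α k / (c1 k)^2) * (2 ^ |(-α - 1/4 : ℝ)| * T ^ (-α - 1/4 : ℝ))) * T := by
      exact add_le_add (add_le_add hGG2T hGGT) hcorrInt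
  _ = ((1/2) * (c1 k)⁻¹ * 2 ^ |3/4 - α| + (1/2) * (c1 k)⁻¹
        + (1/2) * (c3 α k / (c1 k)^2) * 2 ^ |(-α - 1/4 : ℝ)|) * T ^ ((3:ℝ)/4 - α) := by
      rw [show ((1/2) * (c3 α k / (c1 k)^2) * (2 ^ |(-α - 1/4 : ℝ)| * T ^ (-α - 1/4 : ℝ))) * T
        = (1/2) * (c3 α k / (c1 k)^2) * 2 ^ |(-α - 1/4 : ℝ)| * (T ^ (-α - 1/4 : ℝ) * T) by ring,
        hTpow]
      ring
end
end
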